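/- arXiv:1801.04021 — 12 statements merged into one kernel-verified Lean document; each statement's English description precedes it below -/
import Mathlib

section
/- Fix δ > 0 and set e₀ = 0, e₁ = δ. There exists a constant c > 0, depending only on δ, such that for every ν ∈ (0, π/16), every θ ∈ ℂ with Im θ = ν and |Re θ| ≤ 10⁻³, every i ∈ {0, 1}, every y ≥ 0, and every z ∈ A one has |e_i + e^{−θ}·y − z| ≥ c · sin(ν/2) · (1 + y). -/
open Real

/-- The region `A = A₁ ∪ A₂ ∪ A₃` of the complex plane far away from the spectrum of the
dilated free Spin-Boson Hamiltonian (with `e₀ = 0`, `e₁ = δ`). -/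
def regionA (δ ν : ℝ) : Set ℂ :=
  {z : ℂ | z.re < -(δ / 2)} ∪
  {z : ℂ | z.im > δ / 8 * Real.sin ν} ∪
  {z : ℂ | z.re > δ + δ / 2 ∧ z.im ≥ -Real.sin (ν / 2) * (z.re - (δ + δ / 2))}

lemma l1_le_sqrt2_abs (u : ℂ) : |u.re| + |u.im| ≤ Real.sqrt 2 * ‖u‖ := by
  rw [Complex.norm_def, Complex.normSq_apply,
    ← Real.sqrt_mul (by norm_num : (0:ℝ) ≤ 2)]
  have h1 : |u.re| + |u.im| = Real.sqrt ((|u.re| + |u.im|) ^ 2) :=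
    (Real.sqrt_sq (by positivity)).symm
  rw [h1]
  apply Real.sqrt_le_sqrt
  nlinarith [sq_abs u.re, sq_abs u.im, sq_nonneg (|u.re| - |u.im|)]

set_option maxHeartbeats 1000000 in
/-- There is `c > 0` depending only on `δ` such that for every
`ν ∈ (0, π/16)`, every `θ` with `Im θ = ν`, `|Re θ| ≤ 10⁻³`, every `e ∈ {e₀, e₁} = {0, δ}`,
every `y ≥ 0` and every `z ∈ A`: `|e + e^{-θ} y - z| ≥ c sin(ν/2) (1 + y)`. -/
theorem dist_spectrum_regionA (δ : ℝ) (hδ : 0 < δ) :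
    ∃ c > 0, ∀ ν ∈ Set.Ioo (0 : ℝ) (Real.pi / 16), ∀ θ : ℂ, θ.im = ν →
      |θ.re| ≤ 1 / 1000 → ∀ e ∈ ({0, δ} : Set ℝ), ∀ y : ℝ, 0 ≤ y →
        ∀ z ∈ regionA δ ν,
          c * Real.sin (ν / 2) * (1 + y) ≤
            ‖(e : ℂ) + Complex.exp (-θ) * (y : ℂ) - z‖ := by
  refine ⟨min δ 1 / 16, by positivity, ?_⟩
  intro ν hν θ hθim hθre e he y hy z hz
  set c := min δ 1 / 16 with hcdef
  have hc1 : c ≤ δ / 16 := by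
    have := min_le_left δ 1; simp only [hcdef]; linarith
  have hc2 : c ≤ 1 / 16 := by
    have := min_le_right δ 1; simp only [hcdef]; linarith
  have hc0 : 0 < c := by positivity
  clear_value c
  obtain ⟨hν0, hν16⟩ := hν
  have hπ : Real.pi < 3.1416 := by linarith [Real.pi_lt_d6]
  have hν2 : ν < 0.2 := by linarith
  have hs0 : 0 < Real.sin (ν / 2) := Real.sin_pos_of_pos_of_lt_pi (by linarith)
    (by nlinarith [Real.pi_gt_three])
  have hs1 : Real.sin (ν / 2) ≤ 1 := Real.sin_le_one _
  set s := Real.sin (ν / 2) with hsdef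
  have hsν : s ≤ Real.sin ν := by
    apply Real.sin_le_sin_of_le_of_le_pi_div_two (by linarith) (by linarith) (by linarith)
  have hsin0 : 0 < Real.sin ν := lt_of_lt_of_le hs0 hsν
  have hcosν : (0.98 : ℝ) ≤ Real.cos ν := by
    have := Real.one_sub_sq_div_two_le_cos (x := ν)
    nlinarith
  have hcos2 : (0.98 : ℝ) ≤ Real.cos (ν / 2) := by
    have := Real.one_sub_sq_div_two_le_cos (x := ν / 2)
    nlinarith
  have hsin2 : Real.sin ν = 2 * s * Real.cos (ν / 2) := by
    rw [hsdef, show ν = 2 * (ν / 2) by ring, Real.sin_two_mul]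
    ring_nf
  set r := Real.exp (-θ.re) with hrdef
  have hrpos : 0 < r := Real.exp_pos _
  have hr : (0.999 : ℝ) ≤ r := by
    have h1 := abs_le.mp hθre
    have h2 := Real.add_one_le_exp (-θ.re)
    simp only [hrdef]; linarith
  have he' : 0 ≤ e ∧ e ≤ δ := by
    simp only [Set.mem_insert_iff, Set.mem_singleton_iff] at he
    rcases he with rfl | rfl <;> constructor <;> linarith
  set u := (e : ℂ) + Complex.exp (-θ) * (y : ℂ) - z with hu
  have hure : u.re = e + r * Real.cos ν * y - z.re := by
    simp [hu, Complex.exp_re, Complex.exp_im, hθim, Complex.mul_re, Real.cos_neg,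
      Real.sin_neg, hrdef]
  have huim : u.im = -(r * Real.sin ν * y) - z.im := by
    simp [hu, Complex.exp_re, Complex.exp_im, hθim, Complex.mul_im, Real.cos_neg,
      Real.sin_neg, hrdef]
  have habs_re : u.re ≤ ‖u‖ := (le_abs_self _).trans (Complex.abs_re_le_norm u)
  have habs_im : -u.im ≤ ‖u‖ := (neg_le_abs _).trans (Complex.abs_im_le_norm u)
  have hl1 := l1_le_sqrt2_abs u
  have habs0 : (0:ℝ) ≤ ‖u‖ := norm_nonneg u
  clear_value s r u
  -- common small facts
  have e1 : c * s ≤ δ / 16 * s := mul_le_mul_of_nonneg_right hc1 hs0.le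
  have e2 : c * s ≤ 1 / 16 * s := mul_le_mul_of_nonneg_right hc2 hs0.le
  have e3 : c * s * y ≤ 1 / 16 * s * y := mul_le_mul_of_nonneg_right e2 hy
  have hsy : s * y ≤ y := mul_le_of_le_one_left hy hs1
  have hsy0 : 0 ≤ s * y := mul_nonneg hs0.le hy
  have hsδ : δ * s ≤ δ := mul_le_of_le_one_right hδ.le hs1
  have hδs0 : (0:ℝ) ≤ δ * s := mul_nonneg hδ.le hs0.le
  have tν : 0.999 * (s * y) ≤ r * Real.sin ν * y := by
    have h₁ : 0.999 * s ≤ r * Real.sin ν := mul_le_mul hr hsν hs0.le hrpos.le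
    have h₂ := mul_le_mul_of_nonneg_right h₁ hy
    linarith
  rcases hz with (h1 | h2) | h3
  · -- A₁ : z.re < -(δ/2)
    simp only [Set.mem_setOf_eq] at h1
    have hrc : 0.97 * y ≤ r * Real.cos ν * y := by
      have h₁ : (0.97:ℝ) ≤ r * Real.cos ν := by
        have := mul_le_mul hr hcosν (by norm_num) hrpos.le
        linarith
      have h₂ := mul_le_mul_of_nonneg_right h₁ hy
      linarith
    have : c * s * (1 + y) ≤ u.re := by
      rw [hure]
      nlinarith [he'.1, e1, e3, hsδ, hsy, hrc]
    linarith
  · -- A₂ : z.im > δ/8 * sin ν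
    simp only [Set.mem_setOf_eq] at h2
    have hδν : δ / 8 * s ≤ δ / 8 * Real.sin ν :=
      mul_le_mul_of_nonneg_left hsν (by positivity)
    have : c * s * (1 + y) ≤ -u.im := by
      rw [huim]
      nlinarith [e1, e3, hδν, tν, hsy0]
    linarith
  · -- A₃
    simp only [Set.mem_setOf_eq] at h3
    obtain ⟨h3a, h3b⟩ := h3
    have hdiff : 0.95 * s ≤ Real.sin ν - s * Real.cos ν := by
      rw [hsin2]
      nlinarith [mul_le_mul_of_nonneg_left hcos2 hs0.le, Real.cos_le_one ν,
        mul_le_of_le_one_right hs0.le (Real.cos_le_one ν)]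
    have t1 : 0.999 * (0.95 * s) * y ≤ r * (Real.sin ν - s * Real.cos ν) * y := by
      have h₁ : 0.999 * (0.95 * s) ≤ r * (Real.sin ν - s * Real.cos ν) :=
        mul_le_mul hr hdiff (by positivity) hrpos.le
      exact mul_le_mul_of_nonneg_right h₁ hy
    have t2 : 0 ≤ z.im + s * (z.re - (δ + δ / 2)) := by nlinarith
    have t3 : s * e ≤ s * δ := mul_le_mul_of_nonneg_left he'.2 hs0.le
    have hkey : s * (δ / 2 + 0.9 * y) ≤ -(u.im + s * u.re) := by
      rw [hure, huim]
      nlinarith [t1, t2, t3, hsy0]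
    have hsqrt2 : Real.sqrt 2 ≤ 1.5 := by
      rw [show (1.5 : ℝ) = Real.sqrt (1.5 ^ 2) from (Real.sqrt_sq (by norm_num)).symm]
      exact Real.sqrt_le_sqrt (by norm_num)
    have hbound : -(u.im + s * u.re) ≤ |u.im| + |u.re| := by
      have a1 : -u.im ≤ |u.im| := neg_le_abs _
      have a2 : -(s * u.re) ≤ |u.re| := by
        have h₁ : -u.re ≤ |u.re| := neg_le_abs _
        have h₂ : u.re ≤ |u.re| := le_abs_self _
        nlinarith [abs_nonneg u.re]
      linarith
    have hfin : s * (δ / 2 + 0.9 * y) ≤ 1.5 * ‖u‖ := by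
      calc s * (δ / 2 + 0.9 * y) ≤ |u.im| + |u.re| := le_trans hkey hbound
        _ ≤ Real.sqrt 2 * ‖u‖ := by linarith
        _ ≤ 1.5 * ‖u‖ := mul_le_mul_of_nonneg_right hsqrt2 habs0
    linarith [e1, e3, hδs0, hsy0, hfin]
end

section
/- Fix δ > 0 and set e₀ = 0, e₁ = δ. There exists a constant c > 0, depending only on δ, such that for every ν ∈ (0, π/16), every θ ∈ ℂ with Im θ = ν and |Re θ| ≤ 10⁻³, every i, j ∈ {0, 1}, every y ≥ 0, and every z ∈ A one has |e_j + y·e^{−θ} − z| ≥ c · sin(ν/2) · |e_i − z|. -/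
open Real

set_option maxHeartbeats 1000000 in
/-- There is `c > 0` depending only on `δ` such that for every
`ν ∈ (0, π/16)`, every `θ` with `Im θ = ν`, `|Re θ| ≤ 10⁻³`, every
`eᵢ, eⱼ ∈ {e₀, e₁} = {0, δ}`, every `y ≥ 0` and every `z ∈ A`:
`|eⱼ + y e^{-θ} - z| ≥ c sin(ν/2) |eᵢ - z|`. -/
theorem dist_spectrum_regionA_relative (δ : ℝ) (hδ : 0 < δ) :
    ∃ c > 0, ∀ ν ∈ Set.Ioo (0 : ℝ) (Real.pi / 16), ∀ θ : ℂ, θ.im = ν →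
      |θ.re| ≤ 1 / 1000 → ∀ ei ∈ ({0, δ} : Set ℝ), ∀ ej ∈ ({0, δ} : Set ℝ),
        ∀ y : ℝ, 0 ≤ y → ∀ z ∈ regionA δ ν,
          c * Real.sin (ν / 2) * ‖(ei : ℂ) - z‖ ≤
            ‖(ej : ℂ) + (y : ℂ) * Complex.exp (-θ) - z‖ := by
  refine ⟨1/100, by norm_num, ?_⟩
  rintro ν ⟨hν0, hν1⟩ θ hθim hθre ei hei ej hej y hy z hz
  have hpi : Real.pi < 3.2 := by linarith only [Real.pi_lt_d2]
  have hν2 : ν < 0.2 := by linarith only [hν1, hpi]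
  set x := z.re with hxdef
  set β := z.im with hβdef
  set s := Real.sin (ν/2) with hsdef
  set S := Real.sin ν with hSdef
  set c2 := Real.cos ν with hc2def
  have hs0 : 0 < s := Real.sin_pos_of_pos_of_lt_pi (by linarith) (by linarith [Real.pi_gt_three])
  have hs1 : s ≤ 1 := Real.sin_le_one _
  have hS0 : 0 < S := Real.sin_pos_of_pos_of_lt_pi hν0 (by linarith [Real.pi_gt_three])
  have hSν : S ≤ 0.2 := by
    have h := Real.sin_le hν0.le
    rw [← hSdef] at h
    linarith only [h, hν2]
  have hc2a : (0.9:ℝ) ≤ c2 := by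
    have h := Real.one_sub_sq_div_two_le_cos (x := ν)
    rw [← hc2def] at h
    nlinarith only [h, hν0, hν2]
  have hc21 : c2 ≤ 1 := Real.cos_le_one _
  have hcoshalf : (0.95:ℝ) ≤ Real.cos (ν/2) := by
    have h := Real.one_sub_sq_div_two_le_cos (x := ν/2)
    nlinarith only [h, hν0, hν2]
  have hdouble : S = 2 * s * Real.cos (ν/2) := by
    rw [hSdef, hsdef, show ν = 2*(ν/2) by ring, Real.sin_two_mul]
    ring_nf
  have hsS : 1.9 * s ≤ S := by nlinarith only [hdouble, hcoshalf, hs0]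
  have hssS : s ≤ S := by nlinarith only [hdouble, hcoshalf, hs0]
  have hpyth : S^2 + c2^2 = 1 := by
    rw [hSdef, hc2def]; exact Real.sin_sq_add_cos_sq ν
  -- e values
  have hei2 : ei = 0 ∨ ei = δ := by simpa using hei
  have hej2 : ej = 0 ∨ ej = δ := by simpa using hej
  have hei0 : 0 ≤ ei := by rcases hei2 with rfl|rfl <;> linarith
  have hej0 : 0 ≤ ej := by rcases hej2 with rfl|rfl <;> linarith
  have hejδ : ej ≤ δ := by rcases hej2 with rfl|rfl <;> linarith
  -- components
  set r := y * Real.exp (-θ.re) with hrdef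
  have hr0 : 0 ≤ r := mul_nonneg hy (Real.exp_nonneg _)
  set u := (ej:ℂ) + (y:ℂ) * Complex.exp (-θ) - z with hudef
  have hure : u.re = ej + r * c2 - x := by
    rw [hudef, hrdef, hc2def, hxdef]
    simp [Complex.exp_re, hθim]; ring
  have huim : u.im = -(r * S) - β := by
    rw [hudef, hrdef, hSdef, hβdef]
    simp [Complex.exp_im, hθim]; ring
  set D := ‖u‖ with hDdef
  have hD0 : 0 ≤ D := norm_nonneg u
  have hDre : |ej + r * c2 - x| ≤ D := by rw [← hure]; exact Complex.abs_re_le_norm u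
  have hDim : |-(r * S) - β| ≤ D := by rw [← huim]; exact Complex.abs_im_le_norm u
  have hA : ej + r*c2 - x ≤ D := le_trans (le_abs_self _) hDre
  have hB : r*S + β ≤ D := by
    have h := neg_abs_le (-(r * S) - β)
    linarith only [h, hDim]
  have hC : -(r*S) - β ≤ D := le_trans (le_abs_self _) hDim
  have hsq' : D^2 = (ej + r*c2 - x)^2 + (-(r*S) - β)^2 := by
    rw [hDdef, Complex.sq_norm, Complex.normSq_apply, hure, huim]; ring
  have hkey : (β*c2 + (x - ej)*S)^2 + (r - (x-ej)*c2 + S*β)^2 = D^2 := by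
    rw [hsq']
    linear_combination ((x-ej)^2 + β^2 - r^2) * hpyth
  have hDb : β*c2 + (x - ej)*S ≤ D := by
    rcases le_or_gt (β*c2 + (x - ej)*S) 0 with h | h
    · linarith only [h, hD0]
    · have hb2 : (β*c2 + (x - ej)*S)^2 ≤ D^2 := by
        linarith only [hkey, sq_nonneg (r - (x-ej)*c2 + S*β)]
      exact (pow_le_pow_iff_left₀ h.le hD0 two_ne_zero).mp hb2
  have hrc2 : 0 ≤ r*c2 := mul_nonneg hr0 (by linarith)
  have hrS : 0 ≤ r*S := mul_nonneg hr0 hS0.le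
  -- bound on |ei - z|
  have hK : ‖(ei:ℂ) - z‖ ≤ |x| + |β| + δ := by
    have h1 := Complex.norm_le_abs_re_add_abs_im ((ei:ℂ) - z)
    have h2 : ((ei:ℂ) - z).re = ei - x := by simp [hxdef]
    have h3 : ((ei:ℂ) - z).im = -β := by simp [hβdef]
    rw [h2, h3, abs_neg] at h1
    have h4 : |ei - x| ≤ δ + |x| := by
      calc |ei - x| ≤ |ei| + |x| := abs_sub _ _
        _ ≤ δ + |x| := by
            rw [abs_of_nonneg hei0]
            rcases hei2 with rfl|rfl <;> linarith
    linarith only [h1, h4]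
  suffices hgoal : s * (|x| + |β| + δ) ≤ 100 * D by
    have hmono : s * ‖(ei:ℂ) - z‖ ≤ s * (|x| + |β| + δ) :=
      mul_le_mul_of_nonneg_left hK hs0.le
    calc (1:ℝ)/100 * s * ‖(ei:ℂ) - z‖
        = (1/100) * (s * ‖(ei:ℂ) - z‖) := by ring
      _ ≤ (1/100) * (s * (|x| + |β| + δ)) := by linarith only [hmono]
      _ ≤ (1/100) * (100 * D) := by linarith only [hgoal]
      _ = D := by ring
  rcases hz with (h1 | h2) | h3
  · -- A₁ : x < -(δ/2)
    simp only [Set.mem_setOf_eq, ← hxdef] at h1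
    have hxneg : x ≤ 0 := by linarith only [h1, hδ]
    rw [abs_of_nonpos hxneg]
    have hsx : s * (-x) ≤ -x := by nlinarith only [hs1, hxneg]
    have hsδ : s * δ ≤ δ := by nlinarith only [hs1, hδ]
    have hDx : -x ≤ D := by linarith only [hA, hrc2, hej0]
    rcases le_or_gt 0 β with hb0 | hb0
    · rw [abs_of_nonneg hb0]
      have hsβ : s * β ≤ β := by nlinarith only [hs1, hb0]
      have hβD : β ≤ D := by linarith only [hB, hrS]
      linarith only [hsx, hsβ, hsδ, hDx, hβD, h1, hD0]
    · rw [abs_of_neg hb0]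
      have hsβ : s * (-β) ≤ -β := by nlinarith only [hs1, hb0]
      have hrSc2 : r*S ≤ r*c2 := by nlinarith only [hr0, hSν, hc2a]
      linarith only [hsx, hsβ, hsδ, hA, hC, hrSc2, h1, hej0, hD0, hDx]
  · -- A₂ : β > δ/8 * S
    simp only [Set.mem_setOf_eq, ← hβdef, ← hSdef] at h2
    have hβ0 : 0 < β := by nlinarith only [h2, hδ, hS0]
    rw [abs_of_pos hβ0]
    have hsδ8 : s * δ ≤ 8 * β := by nlinarith only [hssS, hδ, h2, hS0]
    have hsβ : s * β ≤ β := by nlinarith only [hs1, hβ0]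
    have hβD : β ≤ D := by linarith only [hB, hrS]
    rcases le_or_gt x ej with hxe | hxe
    · have habsx : |x| ≤ (ej - x) + δ :=
        abs_le.mpr ⟨by linarith only [hxe, hej0, hejδ, hδ], by linarith only [hxe, hejδ]⟩
      have hmul : s * |x| ≤ s * ((ej - x) + δ) :=
        mul_le_mul_of_nonneg_left habsx hs0.le
      have hs2 : s * (ej - x) ≤ ej - x := by nlinarith only [hs1, hxe]
      have hejxD : ej - x ≤ D := by linarith only [hA, hrc2]
      linarith only [hmul, hs2, hejxD, hsδ8, hsβ, hβD, hD0]
    · rw [abs_of_pos (lt_of_le_of_lt hej0 hxe)]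
      have hxS : s * (x - ej) ≤ (x - ej) * S := by nlinarith only [hssS, hxe.le]
      have hc2b : 0.9 * β ≤ β * c2 := by nlinarith only [hβ0, hc2a]
      have hsej : s * ej ≤ s * δ := mul_le_mul_of_nonneg_left hejδ hs0.le
      linarith only [hxS, hDb, hc2b, hsej, hsδ8, hsβ, hβD, hβ0, hD0]
  · -- A₃
    simp only [Set.mem_setOf_eq, ← hxdef, ← hβdef, ← hsdef] at h3
    obtain ⟨hx3, hβ3⟩ := h3
    have hx0 : 0 < x := by linarith only [hx3, hδ]
    have hδx : δ ≤ (2/3) * x := by linarith only [hx3]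
    rw [abs_of_pos hx0]
    have hsδx : s * δ ≤ s * ((2/3) * x) := mul_le_mul_of_nonneg_left hδx hs0.le
    have hxejS : (x - δ) * S ≤ (x - ej) * S := by nlinarith only [hejδ, hS0]
    rcases le_or_gt 0 β with hb0 | hb0
    · rw [abs_of_nonneg hb0]
      have hβc2 : 0.9 * β ≤ β * c2 := by nlinarith only [hb0, hc2a]
      have hsx3 : s * x ≤ 3 * ((x - δ) * S) := by
        nlinarith only [hssS, hx0.le, hδx, hS0.le]
      have hxejS0 : (0:ℝ) ≤ (x - ej) * S :=
        mul_nonneg (by linarith only [hx3, hejδ, hδ]) hS0.le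
      have hsβ : s * β ≤ β := by nlinarith only [hs1, hb0]
      linarith only [hsx3, hxejS, hDb, hβc2, hb0, hsβ, hsδx, hxejS0, hD0]
    · rw [abs_of_neg hb0]
      have hβc2 : β ≤ β * c2 := by nlinarith only [hb0.le, hc21]
      have h19 : (x - δ) * (1.9 * s) ≤ (x - δ) * S :=
        mul_le_mul_of_nonneg_left hsS (by linarith only [hδx, hx0])
      have hsβ2 : s * (-β) ≤ -β := by nlinarith only [hs1, hb0]
      linarith only [hDb, hβc2, h19, hβ3, hsβ2, hsδx, hxejS, hD0, hb0]
end

section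
/- Let ν ∈ (0, π/16), let θ ∈ ℂ with Im θ = ν and |Re θ| ≤ 10⁻³, let λ ∈ ℂ, let ρ' > 0, and let z ∈ ℂ satisfy Im z ≥ Im λ − (2/5)·ρ'·sin ν. Then for every s ≥ ρ' one has |λ − (z − e^{−θ}·s)| ≥ (1/4)·ρ'·sin ν. -/
open Real

/-- Let `ν ∈ (0, π/16)`, `θ` with `Im θ = ν`, `|Re θ| ≤ 10⁻³`, `λ ∈ ℂ`,
`ρ' > 0`, and `z` with `Im z ≥ Im λ - (2/5) ρ' sin ν`. Then for every `s ≥ ρ'`: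
`|λ - (z - e^{-θ} s)| ≥ (1/4) ρ' sin ν`. -/
theorem dist_shifted_eigenvalue_lower_bound
    (ν : ℝ) (hν : ν ∈ Set.Ioo (0 : ℝ) (Real.pi / 16))
    (θ : ℂ) (hθim : θ.im = ν) (hθre : |θ.re| ≤ 1 / 1000)
    (lam : ℂ) (ρ' : ℝ) (hρ' : 0 < ρ')
    (z : ℂ) (hz : lam.im - (2/5) * ρ' * Real.sin ν ≤ z.im) :
    ∀ s : ℝ, ρ' ≤ s →
      (1/4) * ρ' * Real.sin ν ≤ ‖lam - (z - Complex.exp (-θ) * (s : ℂ))‖ := by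
  intro s hs
  have hsin : 0 < Real.sin ν := Real.sin_pos_of_pos_of_lt_pi hν.1
    (lt_trans hν.2 (by linarith [Real.pi_pos]))
  have him : (lam - (z - Complex.exp (-θ) * (s : ℂ))).im
      = lam.im - z.im - Real.exp (-θ.re) * Real.sin ν * s := by
    simp [Complex.sub_im, Complex.mul_im, Complex.exp_im, Complex.exp_re, hθim,
      Real.sin_neg, Real.cos_neg]
    ring
  have hexp : (999 : ℝ) / 1000 ≤ Real.exp (-θ.re) := by
    have h1 : -θ.re + 1 ≤ Real.exp (-θ.re) := Real.add_one_le_exp _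
    have := abs_le.mp hθre
    linarith
  have habs := Complex.abs_im_le_norm (lam - (z - Complex.exp (-θ) * (s : ℂ)))
  rw [him] at habs
  have key : (1/4) * ρ' * Real.sin ν ≤ |lam.im - z.im - Real.exp (-θ.re) * Real.sin ν * s| := by
    rw [abs_sub_comm]
    have h2 : Real.exp (-θ.re) * Real.sin ν * s ≥ (999/1000) * Real.sin ν * ρ' := by
      have hρs : (0:ℝ) < s := lt_of_lt_of_le hρ' hs
      nlinarith [mul_nonneg (mul_nonneg (sub_nonneg.mpr hexp) hsin.le) hρs.le, mul_nonneg hsin.le (sub_nonneg.mpr hs)]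
    calc (1/4) * ρ' * Real.sin ν
        ≤ Real.exp (-θ.re) * Real.sin ν * s - (lam.im - z.im) := by nlinarith
      _ ≤ |Real.exp (-θ.re) * Real.sin ν * s - (lam.im - z.im)| := le_abs_self _
  linarith
end

section
/- Let ν ∈ (0, π/16), let θ ∈ ℂ with Im θ = ν and |Re θ| ≤ 10⁻³, let λ ∈ ℂ, let ρ' > 0, and let z ∈ ℂ with z ≠ λ satisfy Im z ≥ Im λ − (2/5)·ρ'·sin ν. Then for every s ≥ ρ' one has 1/|z − λ − e^{−θ}·s| ≤ (4/sin ν) · (1/|z − λ|). -/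
open Real

/-- Let `ν ∈ (0, π/16)`, `θ` with `Im θ = ν`, `|Re θ| ≤ 10⁻³`, `λ ∈ ℂ`,
`ρ' > 0`, and `z ≠ λ` with `Im z ≥ Im λ - (2/5) ρ' sin ν`. Then for every `s ≥ ρ'`:
`1/|z - λ - e^{-θ} s| ≤ (4 / sin ν) (1 / |z - λ|)`. -/
theorem inv_dist_shifted_le
    (ν : ℝ) (hν : ν ∈ Set.Ioo (0 : ℝ) (Real.pi / 16))
    (θ : ℂ) (hθim : θ.im = ν) (hθre : |θ.re| ≤ 1 / 1000)
    (lam : ℂ) (ρ' : ℝ) (hρ' : 0 < ρ')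
    (z : ℂ) (hzlam : z ≠ lam) (hz : lam.im - (2/5) * ρ' * Real.sin ν ≤ z.im) :
    ∀ s : ℝ, ρ' ≤ s →
      1 / ‖z - lam - Complex.exp (-θ) * (s : ℂ)‖ ≤
        (4 / Real.sin ν) * (1 / ‖z - lam‖) := by
  obtain ⟨hν0, hν16⟩ := hν
  intro s hs
  have hs0 : 0 < s := lt_of_lt_of_le hρ' hs
  have hνπ : ν < Real.pi := by
    have := Real.pi_gt_three; linarith
  have hsin0 : 0 < Real.sin ν := Real.sin_pos_of_pos_of_lt_pi hν0 hνπ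
  have hsin1 : Real.sin ν ≤ 1 := Real.sin_le_one ν
  set w : ℂ := z - lam with hw
  have hw0 : w ≠ 0 := sub_ne_zero.mpr hzlam
  have hB : 0 < ‖w‖ := norm_pos_iff.mpr hw0
  set E : ℝ := Real.exp (-θ.re) with hE
  have hE0 : 0 < E := Real.exp_pos _
  have hre1 : -(1/1000) ≤ θ.re := (abs_le.mp hθre).1
  have hre2 : θ.re ≤ 1/1000 := (abs_le.mp hθre).2
  have hElb : (999/1000 : ℝ) ≤ E := by
    have h1 : -θ.re + 1 ≤ E := Real.add_one_le_exp _
    linarith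
  have hEub : E ≤ 1000/999 := by
    have h1 : θ.re + 1 ≤ Real.exp θ.re := Real.add_one_le_exp _
    have h2 : E * Real.exp θ.re = 1 := by
      rw [hE, ← Real.exp_add]; simp
    nlinarith [Real.exp_pos θ.re]
  set u : ℂ := Complex.exp (-θ) * (s : ℂ) with hu
  have huim : u.im = -(E * Real.sin ν * s) := by
    rw [hu, Complex.mul_im]
    simp [Complex.exp_im, hθim, hE]
  have huabs : ‖u‖ = E * s := by
    rw [hu, norm_mul, Complex.norm_exp, Complex.norm_real, Real.norm_eq_abs, abs_of_pos hs0]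
    simp [hE]
  have hwim : -((2/5) * s * Real.sin ν) ≤ w.im := by
    have h1 : (2/5)*ρ'*Real.sin ν ≤ (2/5)*s*Real.sin ν := by nlinarith
    have h2 : w.im = z.im - lam.im := by rw [hw, Complex.sub_im]
    linarith
  have hkey : Real.sin ν / 4 * ‖w‖ ≤ ‖w - u‖ := by
    rcases le_or_gt (‖w‖) (2*s) with hcase | hcase
    · have him2 : (599/1000) * s * Real.sin ν ≤ (w - u).im := by
        rw [Complex.sub_im, huim]
        nlinarith [mul_nonneg (by linarith : (0:ℝ) ≤ E - 999/1000) (le_of_lt (mul_pos hsin0 hs0))]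
      calc Real.sin ν / 4 * ‖w‖ ≤ Real.sin ν / 4 * (2*s) := by nlinarith
        _ ≤ (599/1000) * s * Real.sin ν := by nlinarith
        _ ≤ (w - u).im := him2
        _ ≤ |(w - u).im| := le_abs_self _
        _ ≤ ‖w - u‖ := Complex.abs_im_le_norm _
    · have h1 : ‖w‖ - ‖u‖ ≤ ‖w - u‖ := by
        simpa using norm_sub_norm_le w u
      rw [huabs] at h1
      nlinarith
  have hpos : 0 < Real.sin ν / 4 * ‖w‖ := by positivity
  have h2 : 1 / ‖w - u‖ ≤ 1 / (Real.sin ν / 4 * ‖w‖) :=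
    one_div_le_one_div_of_le hpos hkey
  calc 1 / ‖w - u‖ ≤ 1 / (Real.sin ν / 4 * ‖w‖) := h2
    _ = 4 / Real.sin ν * (1 / ‖w‖) := by
        field_simp
end

section
/- Let ν ∈ (0, π/16), let θ ∈ ℂ with Im θ = ν and |Re θ| ≤ 10⁻³, let λ ∈ ℂ, let ρ' > 0, and let z ∈ ℂ satisfy Im z ≥ Im λ − (2/5)·ρ'·sin ν. Then for every s ≥ ρ' one has 1/|z − λ − e^{−θ}·s| ≤ (8/sin ν) · 1/(ρ' + |z − λ|). -/
open Real

set_option maxHeartbeats 800000 in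
/-- Let `ν ∈ (0, π/16)`, `θ` with `Im θ = ν`, `|Re θ| ≤ 10⁻³`, `λ ∈ ℂ`,
`ρ' > 0`, and `z` with `Im z ≥ Im λ - (2/5) ρ' sin ν`. Then for every `s ≥ ρ'`:
`1/|z - λ - e^{-θ} s| ≤ (8 / sin ν) · 1/(ρ' + |z - λ|)`. -/
theorem inv_dist_shifted_le_reg
    (ν : ℝ) (hν : ν ∈ Set.Ioo (0 : ℝ) (Real.pi / 16))
    (θ : ℂ) (hθim : θ.im = ν) (hθre : |θ.re| ≤ 1 / 1000)
    (lam : ℂ) (ρ' : ℝ) (hρ' : 0 < ρ')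
    (z : ℂ) (hz : lam.im - (2/5) * ρ' * Real.sin ν ≤ z.im) :
    ∀ s : ℝ, ρ' ≤ s →
      1 / ‖z - lam - Complex.exp (-θ) * (s : ℂ)‖ ≤
        (8 / Real.sin ν) * (1 / (ρ' + ‖z - lam‖)) := by
  obtain ⟨hν0, hν16⟩ := hν
  intro s hs
  have hs0 : 0 < s := lt_of_lt_of_le hρ' hs
  have hpi : Real.pi < 3.15 := by
    have := Real.pi_lt_d2
    linarith
  have hS0 : 0 < Real.sin ν :=
    Real.sin_pos_of_pos_of_lt_pi hν0 (by nlinarith [Real.pi_gt_three])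
  have hS2 : Real.sin ν ≤ 0.2 := by
    have h1 : Real.sin ν < ν := Real.sin_lt hν0
    nlinarith
  -- bounds on r = exp(-θ.re)
  set r : ℝ := Real.exp (-θ.re) with hr
  have hθre1 : -(1/1000 : ℝ) ≤ θ.re := neg_le_of_abs_le hθre
  have hθre2 : θ.re ≤ 1/1000 := le_of_abs_le hθre
  have hr1 : (0.999 : ℝ) ≤ r := by
    have := Real.add_one_le_exp (-θ.re)
    simp only [hr]; linarith
  have hr2 : r ≤ 1.002 := by
    have h1 : Real.exp (-θ.re) * Real.exp θ.re = 1 := by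
      rw [← Real.exp_add]; simp
    have h2 : (0.999 : ℝ) ≤ Real.exp θ.re := by
      have := Real.add_one_le_exp θ.re
      linarith
    nlinarith [Real.exp_pos (-θ.re)]
  set w : ℂ := z - lam with hw
  set A : ℝ := ‖w - Complex.exp (-θ) * (s : ℂ)‖ with hA
  have hW0 : 0 ≤ ‖w‖ := norm_nonneg w
  set W : ℝ := ‖w‖ with hWdef
  -- imaginary part computation
  have hexp_im : (Complex.exp (-θ)).im = -(r * Real.sin ν) := by
    rw [Complex.exp_im]
    simp [hθim, hr, Real.sin_neg]
  have him : (w - Complex.exp (-θ) * (s : ℂ)).im = z.im - lam.im + r * Real.sin ν * s := by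
    simp [hw, Complex.sub_im, Complex.mul_im, hexp_im]
  have hImLB : 0.599 * (s * Real.sin ν) ≤ (w - Complex.exp (-θ) * (s : ℂ)).im := by
    rw [him]
    nlinarith [mul_le_mul_of_nonneg_right hs hS0.le,
      mul_le_mul_of_nonneg_right hr1 (mul_pos hs0 hS0).le]
  have hA1 : 0.599 * (s * Real.sin ν) ≤ A := by
    have h1 : (w - Complex.exp (-θ) * (s : ℂ)).im ≤ A := by
      calc (w - Complex.exp (-θ) * (s : ℂ)).im
          ≤ |(w - Complex.exp (-θ) * (s : ℂ)).im| := le_abs_self _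
        _ ≤ A := Complex.abs_im_le_norm _
    linarith
  have hA0 : 0 < A := by nlinarith
  -- triangle inequality
  have habs_exp : ‖Complex.exp (-θ) * (s : ℂ)‖ = r * s := by
    rw [norm_mul, Complex.norm_exp, Complex.norm_real, Real.norm_eq_abs, abs_of_pos hs0]
    simp [hr]
  have hA2 : W - r * s ≤ A := by
    have h1 : ‖w‖ ≤ A + ‖Complex.exp (-θ) * (s : ℂ)‖ := by
      have := norm_add_le (w - Complex.exp (-θ) * (s : ℂ)) (Complex.exp (-θ) * (s : ℂ))
      simpa using this
    rw [habs_exp] at h1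
    linarith
  -- key inequality
  have key : Real.sin ν * (ρ' + W) ≤ 8 * A := by
    rcases le_or_gt W (3 * s) with hcase | hcase
    · nlinarith
    · nlinarith
  have hden : 0 < ρ' + W := by linarith
  have hrhs : (8 / Real.sin ν) * (1 / (ρ' + W)) = 8 / (Real.sin ν * (ρ' + W)) := by
    field_simp
  rw [hrhs, div_le_div_iff₀ hA0 (by positivity)]
  linarith
end

section
/- Let ν ∈ (0, π/16), let θ ∈ ℂ with Im θ = ν and |Re θ| ≤ 10⁻³, let λ ∈ ℂ, let ρ' > 0, and let z ∈ ℂ with z ≠ λ satisfy Im z ≥ Im λ − (2/5)·ρ'·sin ν. Then for every r with 0 ≤ r ≤ |z − λ| and every y ∈ {0} ∪ [ρ', ∞) one has |(y + r)/(e^{−θ}·y + λ − z)| ≤ 10/sin ν. -/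
open Real

/-- Let `ν ∈ (0, π/16)`, `θ` with `Im θ = ν`, `|Re θ| ≤ 10⁻³`, `λ ∈ ℂ`,
`ρ' > 0`, and `z ≠ λ` with `Im z ≥ Im λ - (2/5) ρ' sin ν`. Then for every
`0 ≤ r ≤ |z - λ|` and every `y ∈ {0} ∪ [ρ', ∞)`:
`|(y + r)/(e^{-θ} y + λ - z)| ≤ 10 / sin ν`. -/
theorem field_energy_quotient_bound
    (ν : ℝ) (hν : ν ∈ Set.Ioo (0 : ℝ) (Real.pi / 16))
    (θ : ℂ) (hθim : θ.im = ν) (hθre : |θ.re| ≤ 1 / 1000)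
    (lam : ℂ) (ρ' : ℝ) (hρ' : 0 < ρ')
    (z : ℂ) (hzlam : z ≠ lam) (hz : lam.im - (2/5) * ρ' * Real.sin ν ≤ z.im) :
    ∀ r : ℝ, 0 ≤ r → r ≤ ‖z - lam‖ →
      ∀ y : ℝ, (y = 0 ∨ ρ' ≤ y) →
        ‖((y : ℂ) + (r : ℂ)) / (Complex.exp (-θ) * (y : ℂ) + lam - z)‖ ≤
          10 / Real.sin ν := by
  obtain ⟨hν0, hν16⟩ := hν
  have hπ : ν < Real.pi := by nlinarith [Real.pi_pos]
  have hs : 0 < Real.sin ν := Real.sin_pos_of_pos_of_lt_pi hν0 hπ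
  have hs1 : Real.sin ν ≤ 1 := Real.sin_le_one ν
  intro r hr0 hr1 y hy
  have hwne : z - lam ≠ 0 := sub_ne_zero.mpr hzlam
  have hwpos : 0 < ‖z - lam‖ := norm_pos_iff.mpr hwne
  set W := ‖z - lam‖ with hW
  obtain ⟨hre1, hre2⟩ := abs_le.mp hθre
  have hea_lb : (0.999 : ℝ) ≤ Real.exp (-θ.re) := by
    have := Real.add_one_le_exp (-θ.re); linarith
  have hea_ub : Real.exp (-θ.re) ≤ 1.002 := by
    have h1 : (0.999 : ℝ) ≤ Real.exp θ.re := by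
      have := Real.add_one_le_exp θ.re; linarith
    rw [Real.exp_neg, inv_le_iff_one_le_mul₀ (by positivity)]
    nlinarith
  set ea := Real.exp (-θ.re) with hea
  rw [norm_div]
  rcases hy with hy0 | hyρ
  · -- y = 0
    subst hy0
    have hden : Complex.exp (-θ) * ((0:ℝ) : ℂ) + lam - z = -(z - lam) := by
      push_cast; ring
    rw [hden, norm_neg]
    have hn : ‖((0:ℝ) : ℂ) + (r : ℂ)‖ = r := by
      rw [show ((0:ℝ) : ℂ) + (r : ℂ) = ((r : ℝ) : ℂ) by push_cast; ring,
        Complex.norm_real, Real.norm_eq_abs, abs_of_nonneg hr0]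
    rw [hn, div_le_div_iff₀ hwpos hs]
    nlinarith
  · -- ρ' ≤ y
    have hy0 : 0 < y := lt_of_lt_of_le hρ' hyρ
    have hn : ‖(y : ℂ) + (r : ℂ)‖ = y + r := by
      rw [show (y : ℂ) + (r : ℂ) = ((y + r : ℝ) : ℂ) by push_cast; ring,
        Complex.norm_real, Real.norm_eq_abs, abs_of_nonneg (by linarith)]
    have him : (Complex.exp (-θ) * (y : ℂ) + lam - z).im
        = -(ea * Real.sin ν) * y + lam.im - z.im := by
      simp [Complex.add_im, Complex.sub_im, Complex.mul_im, Complex.exp_im, Complex.exp_re,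
        Complex.neg_im, Complex.neg_re, hθim, Real.sin_neg, Real.cos_neg, hea]
      try ring
    set D := ‖Complex.exp (-θ) * (y : ℂ) + lam - z‖ with hD
    have hsy : 0 < Real.sin ν * y := mul_pos hs hy0
    have hD1 : ea * Real.sin ν * y - (2/5) * ρ' * Real.sin ν ≤ D := by
      have h1 : -((Complex.exp (-θ) * (y : ℂ) + lam - z).im) ≤ D :=
        (neg_le_abs _).trans (Complex.abs_im_le_norm _)
      rw [him] at h1
      nlinarith
    have habsy : ‖Complex.exp (-θ) * (y : ℂ)‖ = ea * y := by
      rw [norm_mul, Complex.norm_exp, Complex.norm_real, Real.norm_eq_abs, abs_of_nonneg hy0.le]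
      simp [hea, Complex.neg_re]
    have hD2 : W - ea * y ≤ D := by
      have h4 := norm_add_le (-(Complex.exp (-θ) * (y : ℂ) + lam - z))
        (Complex.exp (-θ) * (y : ℂ))
      rw [norm_neg, habsy,
        show -(Complex.exp (-θ) * (y : ℂ) + lam - z) + Complex.exp (-θ) * (y : ℂ)
          = z - lam by ring, ← hW, ← hD] at h4
      linarith
    have h999 : (0.999 : ℝ) * (Real.sin ν * y) ≤ ea * (Real.sin ν * y) :=
      mul_le_mul_of_nonneg_right hea_lb hsy.le
    have hρs : ρ' * Real.sin ν ≤ y * Real.sin ν :=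
      mul_le_mul_of_nonneg_right hyρ hs.le
    have hDgood : (0.599 : ℝ) * (Real.sin ν * y) ≤ D := by nlinarith
    have hDpos : 0 < D := lt_of_lt_of_le (by nlinarith) hDgood
    rw [hn, div_le_div_iff₀ hDpos hs]
    clear_value D W ea
    clear him habsy hD hW hea hθim hθre hz hzlam hwne hn hD1 h999 hρs
    rcases le_or_gt W (2 * y) with hc | hc
    · have hA : (y + r) * Real.sin ν ≤ 3 * (Real.sin ν * y) := by nlinarith
      linarith
    · have hA : (y + r) * Real.sin ν ≤ y + r :=
        mul_le_of_le_one_right (by linarith) hs1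
      have hB : ea * y ≤ 1.002 * y := mul_le_mul_of_nonneg_right hea_ub hy0.le
      linarith
end

section
/- Let ν ∈ (0, π/16) and let m ≥ 4 be a real number. Let v ∈ ℂ, let ξ₁ > 0 and ξ₂ ∈ ℝ satisfy |ξ₂| ≤ ξ₁ · tan(ν/(2m)), and set w = v + (ξ₁ + i·ξ₂)·exp(−iν). Then C_m(w) ⊆ C_m(v) and dist(C_m(w), ℂ ∖ C_m(v)) ≥ ξ₁ · sin(ν/(2m)). -/
open Real

/-- The closed cone `C_m(w) = { w + x e^{-iα} : x ≥ 0, |α - ν| ≤ ν/m }` with vertex `w`. -/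
def cone (ν m : ℝ) (w : ℂ) : Set ℂ :=
  {z : ℂ | ∃ x : ℝ, 0 ≤ x ∧ ∃ α : ℝ, |α - ν| ≤ ν / m ∧
    z = w + (x : ℂ) * Complex.exp (-(α : ℂ) * Complex.I)}

/-- The distance `dist(S, T) = inf {|p - q| : p ∈ S, q ∈ T}` between two subsets of `ℂ`. -/
noncomputable def setDist (S T : Set ℂ) : ℝ :=
  sInf (Set.image2 dist S T)

/-- 1-Lipschitz-type bound for the linear functional `z ↦ z.re * s - z.im * c`. -/
private lemma lip_bound (s c : ℝ) (h : s ^ 2 + c ^ 2 = 1) (d : ℂ) :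
    d.re * s - d.im * c ≤ ‖d‖ := by
  have h1 : d.re * s - d.im * c = (d * ((s : ℂ) + (c : ℂ) * Complex.I)).re := by
    simp only [Complex.mul_re, Complex.add_re, Complex.add_im, Complex.mul_im,
      Complex.I_re, Complex.I_im, Complex.ofReal_re, Complex.ofReal_im]
    ring
  rw [h1]
  refine (Complex.re_le_norm _).trans ?_
  rw [norm_mul, Complex.norm_add_mul_I, h, Real.sqrt_one, mul_one]

/-- Forward characterization: points of the cone satisfy the angular inequality. -/
private lemma mem_cone_imp {ν m : ℝ} (hθ0 : 0 < ν / m) (hθ : ν / m < π / 2)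
    {v z : ℂ} (hz : z ∈ cone ν m v) :
    |((z - v) * Complex.exp (Complex.I * ν)).im| * Real.cos (ν / m)
      ≤ ((z - v) * Complex.exp (Complex.I * ν)).re * Real.sin (ν / m) := by
  obtain ⟨x, hx, α, hα, rfl⟩ := hz
  have hcomb : (v + (x : ℂ) * Complex.exp (-(α : ℂ) * Complex.I) - v)
        * Complex.exp (Complex.I * ν)
      = (x : ℂ) * Complex.exp (((ν - α : ℝ) : ℂ) * Complex.I) := by
    rw [add_sub_cancel_left, mul_assoc, ← Complex.exp_add]
    congr 2
    push_cast
    ring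
  rw [hcomb]
  have hre : ((x : ℂ) * Complex.exp (((ν - α : ℝ) : ℂ) * Complex.I)).re
      = x * Real.cos (ν - α) := by
    rw [Complex.mul_re, Complex.exp_ofReal_mul_I_re, Complex.exp_ofReal_mul_I_im]
    simp
  have him : ((x : ℂ) * Complex.exp (((ν - α : ℝ) : ℂ) * Complex.I)).im
      = x * Real.sin (ν - α) := by
    rw [Complex.mul_im, Complex.exp_ofReal_mul_I_re, Complex.exp_ofReal_mul_I_im]
    simp
  rw [hre, him]
  set β := ν - α with hβ
  have hβle : |β| ≤ ν / m := by rw [hβ, abs_sub_comm]; exact hα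
  obtain ⟨hβ1, hβ2⟩ := abs_le.mp hβle
  have h1 : 0 ≤ Real.sin (ν / m - β) :=
    Real.sin_nonneg_of_nonneg_of_le_pi (by linarith) (by linarith [Real.pi_pos])
  have h2 : 0 ≤ Real.sin (ν / m + β) :=
    Real.sin_nonneg_of_nonneg_of_le_pi (by linarith) (by linarith [Real.pi_pos])
  rw [Real.sin_sub] at h1
  rw [Real.sin_add] at h2
  have hcos : 0 ≤ Real.cos (ν / m) :=
    (Real.cos_pos_of_mem_Ioo ⟨by linarith, hθ⟩).le
  have hcore : |Real.sin β| * Real.cos (ν / m) ≤ Real.cos β * Real.sin (ν / m) := by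
    rw [← abs_of_nonneg hcos, ← abs_mul]
    exact abs_le.mpr ⟨by linarith, by linarith⟩
  calc |x * Real.sin β| * Real.cos (ν / m)
      = x * (|Real.sin β| * Real.cos (ν / m)) := by
        rw [abs_mul, abs_of_nonneg hx]; ring
    _ ≤ x * (Real.cos β * Real.sin (ν / m)) := by
        exact mul_le_mul_of_nonneg_left hcore hx
    _ = x * Real.cos β * Real.sin (ν / m) := by ring

/-- Backward characterization: the angular inequality implies cone membership. -/
private lemma imp_mem_cone {ν m : ℝ} (hθ0 : 0 < ν / m) (hθ : ν / m < π / 2)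
    {v z : ℂ}
    (h : |((z - v) * Complex.exp (Complex.I * ν)).im| * Real.cos (ν / m)
      ≤ ((z - v) * Complex.exp (Complex.I * ν)).re * Real.sin (ν / m)) :
    z ∈ cone ν m v := by
  have hcos : 0 < Real.cos (ν / m) := Real.cos_pos_of_mem_Ioo ⟨by linarith, hθ⟩
  have hsin : 0 < Real.sin (ν / m) :=
    Real.sin_pos_of_pos_of_lt_pi hθ0 (by linarith [Real.pi_pos])
  have hzeq : z = v + ((z - v) * Complex.exp (Complex.I * ν))
      * Complex.exp (-(ν : ℂ) * Complex.I) := by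
    rw [mul_assoc, ← Complex.exp_add]
    have h0 : Complex.I * (ν : ℂ) + -(ν : ℂ) * Complex.I = 0 := by ring
    rw [h0, Complex.exp_zero, mul_one]
    ring
  set u := (z - v) * Complex.exp (Complex.I * ν) with hu
  by_cases h0 : u = 0
  · refine ⟨0, le_rfl, ν, by simpa using hθ0.le, ?_⟩
    rw [hzeq, h0]
    simp
  · have hre0 : 0 ≤ u.re := by
      nlinarith [mul_nonneg (abs_nonneg u.im) hcos.le]
    have hre : 0 < u.re := by
      rcases hre0.eq_or_lt with h2 | h2
      · exfalso
        apply h0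
        have him : |u.im| ≤ 0 := by nlinarith
        have him' : u.im = 0 := abs_nonpos_iff.mp him
        apply Complex.ext <;> simp [← h2, him']
      · exact h2
    have habs : 0 < ‖u‖ := by
      simpa [norm_pos_iff] using h0
    have hφ : |Complex.arg u| < π / 2 :=
      Complex.abs_arg_lt_pi_div_two_iff.mpr (Or.inl hre)
    obtain ⟨hφ1, hφ2⟩ := abs_lt.mp hφ
    have hcosφ : Real.cos (Complex.arg u) = u.re / ‖u‖ := Complex.cos_arg h0
    have hsinφ : Real.sin (Complex.arg u) = u.im / ‖u‖ := Complex.sin_arg u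
    have him1 : u.im ≤ |u.im| := le_abs_self _
    have him2 : -|u.im| ≤ u.im := neg_abs_le _
    have key1 : 0 ≤ Real.sin (ν / m - Complex.arg u) := by
      rw [Real.sin_sub, hcosφ, hsinφ]
      have heq : Real.sin (ν / m) * (u.re / ‖u‖)
          - Real.cos (ν / m) * (u.im / ‖u‖)
          = (u.re * Real.sin (ν / m) - u.im * Real.cos (ν / m)) / ‖u‖ := by
        ring
      rw [heq]
      apply div_nonneg _ habs.le
      nlinarith
    have key2 : 0 ≤ Real.sin (ν / m + Complex.arg u) := by
      rw [Real.sin_add, hcosφ, hsinφ]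
      have heq : Real.sin (ν / m) * (u.re / ‖u‖)
          + Real.cos (ν / m) * (u.im / ‖u‖)
          = (u.re * Real.sin (ν / m) + u.im * Real.cos (ν / m)) / ‖u‖ := by
        ring
      rw [heq]
      apply div_nonneg _ habs.le
      nlinarith
    have hargle : |Complex.arg u| ≤ ν / m := by
      rw [abs_le]
      constructor
      · by_contra hc
        push_neg at hc
        have := Real.sin_neg_of_neg_of_neg_pi_lt
          (show ν / m + Complex.arg u < 0 by linarith)
          (by linarith [Real.pi_pos])
        linarith
      · by_contra hc
        push_neg at hc
        have := Real.sin_neg_of_neg_of_neg_pi_lt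
          (show ν / m - Complex.arg u < 0 by linarith)
          (by linarith [Real.pi_pos])
        linarith
    refine ⟨‖u‖, norm_nonneg u, ν - Complex.arg u, ?_, ?_⟩
    · have : ν - Complex.arg u - ν = -(Complex.arg u) := by ring
      rw [this, abs_neg]
      exact hargle
    · rw [hzeq]
      congr 1
      have hc : (((ν - Complex.arg u : ℝ) : ℂ)) = (ν : ℂ) - (Complex.arg u : ℂ) := by
        push_cast; ring
      rw [hc, show -((ν : ℂ) - (Complex.arg u : ℂ)) * Complex.I
          = (Complex.arg u : ℂ) * Complex.I + -(ν : ℂ) * Complex.I by ring,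
        Complex.exp_add, ← mul_assoc, Complex.norm_mul_exp_arg_mul_I]

/-- For `ν ∈ (0, π/16)`, `m ≥ 4`, `v ∈ ℂ`, `ξ₁ > 0`,
`|ξ₂| ≤ ξ₁ tan(ν/(2m))` and `w = v + (ξ₁ + i ξ₂) e^{-iν}`:
`C_m(w) ⊆ C_m(v)` and `dist(C_m(w), ℂ ∖ C_m(v)) ≥ ξ₁ sin(ν/(2m))`. -/
theorem cone_shift_subset_and_dist
    (ν m : ℝ) (hν : ν ∈ Set.Ioo (0 : ℝ) (Real.pi / 16)) (hm : 4 ≤ m)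
    (v : ℂ) (ξ₁ ξ₂ : ℝ) (hξ₁ : 0 < ξ₁) (hξ₂ : |ξ₂| ≤ ξ₁ * Real.tan (ν / (2 * m)))
    (w : ℂ) (hw : w = v + ((ξ₁ : ℂ) + Complex.I * (ξ₂ : ℂ)) * Complex.exp (-Complex.I * (ν : ℂ))) :
    cone ν m w ⊆ cone ν m v ∧
      ξ₁ * Real.sin (ν / (2 * m)) ≤ setDist (cone ν m w) (cone ν m v)ᶜ := by
  obtain ⟨hν0, hν1⟩ := hν
  have hπ := Real.pi_pos
  have hm0 : (0 : ℝ) < m := by linarith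
  have hθ0 : 0 < ν / m := div_pos hν0 hm0
  have hθπ : ν / m < π / 2 := by
    have h4 : ν / m ≤ ν / 4 := div_le_div_of_nonneg_left hν0.le (by norm_num) hm
    linarith
  set θ := ν / m with hθdef
  have hhalf : ν / (2 * m) = θ / 2 := by rw [hθdef]; ring
  have hcos : 0 < Real.cos θ := Real.cos_pos_of_mem_Ioo ⟨by linarith, hθπ⟩
  have hsin : 0 < Real.sin θ := Real.sin_pos_of_pos_of_lt_pi hθ0 (by linarith)
  have hcoshalf : 0 < Real.cos (θ / 2) :=
    Real.cos_pos_of_mem_Ioo ⟨by linarith, by linarith⟩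
  have hsinhalf : 0 < Real.sin (θ / 2) :=
    Real.sin_pos_of_pos_of_lt_pi (by linarith) (by linarith)
  have htan : Real.sin θ - Real.tan (θ / 2) * Real.cos θ = Real.tan (θ / 2) := by
    have h1 : Real.sin (θ - θ / 2) = Real.sin (θ / 2) := by congr 1; ring
    rw [Real.sin_sub] at h1
    rw [Real.tan_eq_sin_div_cos]
    field_simp
    linarith
  have htanpos : 0 < Real.tan (θ / 2) := by
    rw [Real.tan_eq_sin_div_cos]; positivity
  have hsintan : Real.sin (θ / 2) ≤ Real.tan (θ / 2) := by
    rw [Real.tan_eq_sin_div_cos, le_div_iff₀ hcoshalf]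
    nlinarith [Real.cos_le_one (θ / 2)]
  have hξ₂' : |ξ₂| ≤ ξ₁ * Real.tan (θ / 2) := by rwa [hhalf] at hξ₂
  -- key estimate for points of the shifted cone
  have hkey : ∀ p ∈ cone ν m w,
      ξ₁ * Real.tan (θ / 2) ≤ ((p - v) * Complex.exp (Complex.I * ν)).re * Real.sin θ
          - ((p - v) * Complex.exp (Complex.I * ν)).im * Real.cos θ ∧
      ξ₁ * Real.tan (θ / 2) ≤ ((p - v) * Complex.exp (Complex.I * ν)).re * Real.sin θ
          + ((p - v) * Complex.exp (Complex.I * ν)).im * Real.cos θ := by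
    intro p hp
    have hA := mem_cone_imp hθ0 hθπ hp
    have hsplit : (p - v) * Complex.exp (Complex.I * ν)
        = ((ξ₁ : ℂ) + Complex.I * (ξ₂ : ℂ)) + (p - w) * Complex.exp (Complex.I * ν) := by
      have hone : Complex.exp (-Complex.I * (ν : ℂ)) * Complex.exp (Complex.I * ν) = 1 := by
        rw [← Complex.exp_add, show -Complex.I * (ν : ℂ) + Complex.I * ν = 0 by ring,
          Complex.exp_zero]
      calc (p - v) * Complex.exp (Complex.I * ν)
          = (w - v) * Complex.exp (Complex.I * ν)
            + (p - w) * Complex.exp (Complex.I * ν) := by ring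
        _ = ((ξ₁ : ℂ) + Complex.I * (ξ₂ : ℂ)) + (p - w) * Complex.exp (Complex.I * ν) := by
            rw [hw, add_sub_cancel_left, mul_assoc, hone, mul_one]
    set u' := (p - w) * Complex.exp (Complex.I * ν) with hu'
    rw [hsplit]
    have hre : (((ξ₁ : ℂ) + Complex.I * (ξ₂ : ℂ)) + u').re = ξ₁ + u'.re := by simp
    have him : (((ξ₁ : ℂ) + Complex.I * (ξ₂ : ℂ)) + u').im = ξ₂ + u'.im := by simp
    rw [hre, him]
    have e1 : ξ₁ * Real.sin θ - ξ₁ * (Real.tan (θ / 2) * Real.cos θ)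
        = ξ₁ * Real.tan (θ / 2) := by rw [← mul_sub, htan]
    have a1 : ξ₂ * Real.cos θ ≤ |ξ₂| * Real.cos θ :=
      mul_le_mul_of_nonneg_right (le_abs_self _) hcos.le
    have a1' : -(|ξ₂| * Real.cos θ) ≤ ξ₂ * Real.cos θ := by
      nlinarith [neg_abs_le ξ₂]
    have a2 : |ξ₂| * Real.cos θ ≤ ξ₁ * Real.tan (θ / 2) * Real.cos θ :=
      mul_le_mul_of_nonneg_right hξ₂' hcos.le
    have a3 : u'.im * Real.cos θ ≤ |u'.im| * Real.cos θ :=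
      mul_le_mul_of_nonneg_right (le_abs_self _) hcos.le
    have a3' : -(|u'.im| * Real.cos θ) ≤ u'.im * Real.cos θ := by
      nlinarith [neg_abs_le u'.im]
    constructor <;> linarith
  have hsub : cone ν m w ⊆ cone ν m v := by
    intro z hz
    obtain ⟨H1, H2⟩ := hkey z hz
    apply imp_mem_cone hθ0 hθπ
    have hpos : 0 < ξ₁ * Real.tan (θ / 2) := mul_pos hξ₁ htanpos
    rw [← abs_of_nonneg hcos.le, ← abs_mul]
    exact abs_le.mpr ⟨by linarith, by linarith⟩
  refine ⟨hsub, ?_⟩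
  rw [setDist]
  apply le_csInf
  · -- nonemptiness of the set of distances
    have hwmem : w ∈ cone ν m w := ⟨0, le_rfl, ν, by simpa using hθ0.le, by simp⟩
    have hqmem : v - Complex.exp (-(ν : ℂ) * Complex.I) ∈ (cone ν m v)ᶜ := by
      intro hmem
      have h' := mem_cone_imp hθ0 hθπ hmem
      have hval : (v - Complex.exp (-(ν : ℂ) * Complex.I) - v)
          * Complex.exp (Complex.I * ν) = -1 := by
        rw [sub_sub_cancel_left, neg_mul, ← Complex.exp_add,
          show -(ν : ℂ) * Complex.I + Complex.I * ν = 0 by ring, Complex.exp_zero]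
      rw [hval] at h'
      simp only [Complex.neg_im, Complex.one_im, neg_zero, abs_zero, zero_mul,
        Complex.neg_re, Complex.one_re, neg_mul, one_mul] at h'
      linarith
    exact ⟨_, Set.mem_image2_of_mem hwmem hqmem⟩
  · rintro d ⟨p, hp, q, hq, rfl⟩
    obtain ⟨H1, H2⟩ := hkey p hp
    have hq' : ¬ (|((q - v) * Complex.exp (Complex.I * ν)).im| * Real.cos θ
        ≤ ((q - v) * Complex.exp (Complex.I * ν)).re * Real.sin θ) :=
      fun hc => hq (imp_mem_cone hθ0 hθπ hc)
    push_neg at hq'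
    set up := (p - v) * Complex.exp (Complex.I * ν) with hup
    set uq := (q - v) * Complex.exp (Complex.I * ν) with huq
    have hdist : ‖up - uq‖ = dist p q := by
      rw [Complex.dist_eq, hup, huq,
        show (p - v) * Complex.exp (Complex.I * ν) - (q - v) * Complex.exp (Complex.I * ν)
          = (p - q) * Complex.exp (Complex.I * ν) by ring,
        norm_mul, Complex.norm_exp]
      simp
    have hbound : ξ₁ * Real.sin (ν / (2 * m)) ≤ ξ₁ * Real.tan (θ / 2) := by
      rw [hhalf]
      exact mul_le_mul_of_nonneg_left hsintan hξ₁.le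
    rcases le_or_gt 0 uq.im with him | him
    · have hlt : uq.re * Real.sin θ - uq.im * Real.cos θ < 0 := by
        rw [abs_of_nonneg him] at hq'
        linarith
      have hl := lip_bound (Real.sin θ) (Real.cos θ) (Real.sin_sq_add_cos_sq θ) (up - uq)
      rw [hdist] at hl
      simp only [Complex.sub_re, Complex.sub_im] at hl
      linarith
    · have hlt : uq.re * Real.sin θ + uq.im * Real.cos θ < 0 := by
        rw [abs_of_neg him] at hq'
        linarith
      have hl := lip_bound (Real.sin θ) (-Real.cos θ)
        (by rw [neg_pow]; simpa using Real.sin_sq_add_cos_sq θ) (up - uq)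
      rw [hdist] at hl
      simp only [Complex.sub_re, Complex.sub_im] at hl
      linarith
end

section
/- Let ν ∈ (0, π/16) and let m ≥ 4 be a real number. Let v ∈ ℂ and t ≥ 0, and set w = v + t·exp(−iν). Then C_m(w) ⊆ C_m(v) and dist(C_m(w), ℂ ∖ C_m(v)) ≥ t · sin(ν/m). -/
open Real

lemma im_aux (x α β : ℝ) :
    ((x : ℂ) * Complex.exp (-(α : ℂ) * Complex.I) * Complex.exp ((β : ℂ) * Complex.I)).im
      = x * Real.sin (β - α) := by
  rw [mul_assoc, ← Complex.exp_add]
  have h : -(α : ℂ) * Complex.I + (β : ℂ) * Complex.I = ((β - α : ℝ) : ℂ) * Complex.I := by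
    push_cast; ring
  rw [h, Complex.mul_im, Complex.exp_ofReal_mul_I_im, Complex.ofReal_re, Complex.ofReal_im,
    zero_mul, add_zero]

lemma mem_cone_iff (ν m : ℝ) (hν0 : 0 < ν) (hνπ : ν < Real.pi / 16) (hm : 4 ≤ m)
    (v z : ℂ) :
    z ∈ cone ν m v ↔
      0 ≤ ((z - v) * Complex.exp ((↑(ν + ν / m) : ℂ) * Complex.I)).im ∧
        ((z - v) * Complex.exp ((↑(ν - ν / m) : ℂ) * Complex.I)).im ≤ 0 := by
  have hm0 : (0 : ℝ) < m := lt_of_lt_of_le (by norm_num) hm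
  have hq0 : 0 < ν / m := div_pos hν0 hm0
  have hqν : ν / m < ν := by
    rw [div_lt_iff₀ hm0]; nlinarith
  have hpi : 0 < Real.pi := Real.pi_pos
  have hβ1pos : 0 < ν + ν / m := by linarith
  have hβ1pi : ν + ν / m < Real.pi := by nlinarith
  have hβ2pos : 0 < ν - ν / m := by linarith
  constructor
  · rintro ⟨x, hx, α, hα, rfl⟩
    rw [abs_le] at hα
    constructor
    · rw [add_sub_cancel_left, im_aux]
      have h1 : 0 ≤ ν + ν / m - α := by linarith [hα.2]
      have h2 : ν + ν / m - α ≤ Real.pi := by linarith [hα.1]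
      exact mul_nonneg hx (Real.sin_nonneg_of_nonneg_of_le_pi h1 h2)
    · rw [add_sub_cancel_left, im_aux]
      have h1 : ν - ν / m - α ≤ 0 := by linarith [hα.1]
      have h2 : -Real.pi ≤ ν - ν / m - α := by linarith [hα.2]
      exact mul_nonpos_of_nonneg_of_nonpos hx
        (Real.sin_nonpos_of_nonpos_of_neg_pi_le h1 h2)
  · rintro ⟨h1, h2⟩
    by_cases hzv : z = v
    · exact ⟨0, le_refl 0, ν, by simp [le_of_lt hq0], by simp [hzv]⟩
    · have hu : z - v ≠ 0 := sub_ne_zero.mpr hzv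
      set θ := (z - v).arg with hθ
      set r := ‖z - v‖ with hr
      have hr0 : 0 < r := norm_pos_iff.mpr hu
      have huθ : z - v = (r : ℂ) * Complex.exp (-(↑(-θ) : ℂ) * Complex.I) := by
        have h := Complex.norm_mul_exp_arg_mul_I (z - v)
        rw [← h]; push_cast; ring_nf
        rw [hr, hθ, mul_comm Complex.I]
      have hθlo : -Real.pi < θ := Complex.neg_pi_lt_arg _
      have hθhi : θ ≤ Real.pi := Complex.arg_le_pi _
      rw [huθ, im_aux, sub_neg_eq_add] at h1 h2
      have hs1 : 0 ≤ Real.sin (ν + ν / m + θ) := by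
        by_contra hcon; push_neg at hcon; nlinarith
      have hs2 : Real.sin (ν - ν / m + θ) ≤ 0 := by
        by_contra hcon; push_neg at hcon; nlinarith
      -- from hs1: -(ν + ν/m) ≤ θ
      have hA : -(ν + ν / m) ≤ θ := by
        by_contra hcon
        push_neg at hcon
        have : Real.sin (ν + ν / m + θ) < 0 :=
          Real.sin_neg_of_neg_of_neg_pi_lt (by linarith) (by linarith)
        linarith
      -- from hs1: θ ≤ π - (ν + ν/m)
      have hB : θ ≤ Real.pi - (ν + ν / m) := by
        by_contra hcon
        push_neg at hcon
        have hposarg : 0 < ν + ν / m + θ - Real.pi := by linarith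
        have hltpi : ν + ν / m + θ - Real.pi < Real.pi := by linarith
        have : 0 < Real.sin (ν + ν / m + θ - Real.pi) :=
          Real.sin_pos_of_pos_of_lt_pi hposarg hltpi
        rw [Real.sin_sub_pi] at this
        linarith
      -- from hs2 and hB: θ ≤ -(ν - ν/m)
      have hC : θ ≤ -(ν - ν / m) := by
        by_contra hcon
        push_neg at hcon
        have : 0 < Real.sin (ν - ν / m + θ) :=
          Real.sin_pos_of_pos_of_lt_pi (by linarith) (by linarith)
        linarith
      refine ⟨r, le_of_lt hr0, -θ, ?_, by rw [← huθ]; ring⟩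
      rw [abs_le]
      constructor <;> linarith

lemma shift_im (v w : ℂ) (t ν' β : ℝ)
    (hw : w = v + (t : ℂ) * Complex.exp (-Complex.I * (ν' : ℂ))) (z : ℂ) :
    ((z - v) * Complex.exp ((β : ℂ) * Complex.I)).im
      = ((z - w) * Complex.exp ((β : ℂ) * Complex.I)).im + t * Real.sin (β - ν') := by
  have hsplit : z - v = (z - w) + (t : ℂ) * Complex.exp (-(ν' : ℂ) * Complex.I) := by
    rw [hw]; ring_nf
  rw [hsplit, add_mul, Complex.add_im, im_aux]

/-- For `ν ∈ (0, π/16)`, `m ≥ 4`, `v ∈ ℂ`, `t ≥ 0` and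
`w = v + t e^{-iν}`: `C_m(w) ⊆ C_m(v)` and `dist(C_m(w), ℂ ∖ C_m(v)) ≥ t sin(ν/m)`. -/
theorem cone_axis_shift_subset_and_dist
    (ν m : ℝ) (hν : ν ∈ Set.Ioo (0 : ℝ) (Real.pi / 16)) (hm : 4 ≤ m)
    (v : ℂ) (t : ℝ) (ht : 0 ≤ t)
    (w : ℂ) (hw : w = v + (t : ℂ) * Complex.exp (-Complex.I * (ν : ℂ))) :
    cone ν m w ⊆ cone ν m v ∧
      t * Real.sin (ν / m) ≤ setDist (cone ν m w) (cone ν m v)ᶜ := by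
  obtain ⟨hν0, hνπ⟩ := hν
  have hm0 : (0 : ℝ) < m := lt_of_lt_of_le (by norm_num) hm
  have hq0 : 0 < ν / m := div_pos hν0 hm0
  have hβ1 : (ν + ν / m) - ν = ν / m := by ring
  have hβ2 : (ν - ν / m) - ν = -(ν / m) := by ring
  have hsin : 0 ≤ t * Real.sin (ν / m) := by
    apply mul_nonneg ht
    apply Real.sin_nonneg_of_nonneg_of_le_pi (le_of_lt hq0)
    nlinarith [Real.pi_pos, div_le_self (le_of_lt hν0) (le_trans (by norm_num) hm)]
  -- quantitative membership for points of cone ν m w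
  have key : ∀ p ∈ cone ν m w,
      t * Real.sin (ν / m) ≤ ((p - v) * Complex.exp ((↑(ν + ν / m) : ℂ) * Complex.I)).im ∧
      ((p - v) * Complex.exp ((↑(ν - ν / m) : ℂ) * Complex.I)).im ≤ -(t * Real.sin (ν / m)) := by
    intro p hp
    rw [mem_cone_iff ν m hν0 hνπ hm] at hp
    constructor
    · rw [shift_im v w t ν _ hw, hβ1]
      linarith [hp.1]
    · rw [shift_im v w t ν _ hw, hβ2, Real.sin_neg]
      linarith [hp.2]
  have hsub : cone ν m w ⊆ cone ν m v := by
    intro z hz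
    rw [mem_cone_iff ν m hν0 hνπ hm]
    obtain ⟨k1, k2⟩ := key z hz
    exact ⟨le_trans hsin k1, le_trans k2 (by linarith)⟩
  refine ⟨hsub, ?_⟩
  -- nonemptiness of the image2
  have hwmem : w ∈ cone ν m w :=
    ⟨0, le_refl 0, ν, by simp [le_of_lt hq0], by simp⟩
  have hqmem : (v + (-Complex.I) * Complex.exp (-(↑(ν + ν / m) : ℂ) * Complex.I))
      ∈ (cone ν m v)ᶜ := by
    rw [Set.mem_compl_iff, mem_cone_iff ν m hν0 hνπ hm]
    push_neg
    intro h1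
    exfalso
    rw [add_sub_cancel_left, mul_assoc, ← Complex.exp_add] at h1
    have he : -(↑(ν + ν / m) : ℂ) * Complex.I + (↑(ν + ν / m) : ℂ) * Complex.I = 0 := by ring
    rw [he, Complex.exp_zero, mul_one] at h1
    simp at h1
    linarith
  apply le_csInf
  · exact ⟨dist w _, Set.mem_image2_of_mem hwmem hqmem⟩
  · rintro d ⟨p, hp, q, hq, rfl⟩
    obtain ⟨k1, k2⟩ := key p hp
    rw [Set.mem_compl_iff, mem_cone_iff ν m hν0 hνπ hm] at hq
    push_neg at hq
    rw [Complex.dist_eq]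
    by_cases hc : 0 ≤ ((q - v) * Complex.exp ((↑(ν + ν / m) : ℂ) * Complex.I)).im
    · -- second condition fails: im with β₂ is > 0
      have hq2 : 0 < ((q - v) * Complex.exp ((↑(ν - ν / m) : ℂ) * Complex.I)).im := hq hc
      have him : t * Real.sin (ν / m) ≤
          ((q - p) * Complex.exp ((↑(ν - ν / m) : ℂ) * Complex.I)).im := by
        have : (q - p) = (q - v) - (p - v) := by ring
        rw [this, sub_mul, Complex.sub_im]
        linarith
      calc t * Real.sin (ν / m)
          ≤ ((q - p) * Complex.exp ((↑(ν - ν / m) : ℂ) * Complex.I)).im := him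
        _ ≤ |((q - p) * Complex.exp ((↑(ν - ν / m) : ℂ) * Complex.I)).im| := le_abs_self _
        _ ≤ ‖((q - p) * Complex.exp ((↑(ν - ν / m) : ℂ) * Complex.I))‖ :=
            Complex.abs_im_le_norm _
        _ = ‖q - p‖ := by
            rw [norm_mul, Complex.norm_exp_ofReal_mul_I, mul_one]
        _ = ‖p - q‖ := norm_sub_rev _ _
    · push_neg at hc
      have him : t * Real.sin (ν / m) ≤
          ((p - q) * Complex.exp ((↑(ν + ν / m) : ℂ) * Complex.I)).im := by
        have : (p - q) = (p - v) - (q - v) := by ring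
        rw [this, sub_mul, Complex.sub_im]
        linarith
      calc t * Real.sin (ν / m)
          ≤ ((p - q) * Complex.exp ((↑(ν + ν / m) : ℂ) * Complex.I)).im := him
        _ ≤ |((p - q) * Complex.exp ((↑(ν + ν / m) : ℂ) * Complex.I)).im| := le_abs_self _
        _ ≤ ‖((p - q) * Complex.exp ((↑(ν + ν / m) : ℂ) * Complex.I))‖ :=
            Complex.abs_im_le_norm _
        _ = ‖p - q‖ := by
            rw [norm_mul, Complex.norm_exp_ofReal_mul_I, mul_one]
end

section
/- Let ν ∈ (0, π/16), let m ≥ 4 be a real number, let θ ∈ ℂ with Im θ = ν and |Re θ| ≤ 10⁻³, and let λ ∈ ℂ. Then for every z ∈ ℂ with z ∉ C_m(λ), every r with 0 ≤ r ≤ |z − λ|, and every s ≥ 0, one has |(s + r)/(e^{−θ}·s − (z − λ))| ≤ 6/sin(ν/m). -/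
open Real

private lemma quad_aux (σ c t W r : ℝ) (hσc : σ ^ 2 = 1 - c ^ 2)
    (ht : 0 ≤ t) (hW : 0 ≤ W) (hr : 0 ≤ r) (hrW : r ≤ W) :
    (σ * ((t + r) / 2)) ^ 2 ≤ t ^ 2 + W ^ 2 - 2 * (t * (c * W)) := by
  have h2 : 0 ≤ 1 - c ^ 2 := by nlinarith [sq_nonneg σ]
  have hrw : (σ * ((t + r) / 2)) ^ 2 = (1 - c ^ 2) * ((t + r) / 2) ^ 2 := by
    rw [mul_pow, hσc]
  rw [hrw]
  nlinarith [mul_nonneg (sq_nonneg c) (sq_nonneg (t - W)), sq_nonneg (t - W),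
    mul_nonneg (mul_nonneg ht hW) (sq_nonneg (c - 1)),
    mul_nonneg (mul_nonneg h2 (sub_nonneg.2 hrW))
      (show (0:ℝ) ≤ 2 * t + W + r by linarith)]

private lemma cone_re_bound (ν m : ℝ) (hνm0 : 0 < ν / m) (hνmlt : ν / m < Real.pi / 2)
    (lam z : ℂ) (hz : z ∉ cone ν m lam) :
    ((z - lam) * Complex.exp ((ν:ℂ) * Complex.I)).re
      ≤ Real.cos (ν / m) * ‖z - lam‖ := by
  have hc0 : 0 < Real.cos (ν / m) := Real.cos_pos_of_mem_Ioo ⟨by linarith, hνmlt⟩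
  set w := z - lam with hwdef
  set u := w * Complex.exp ((ν:ℂ) * Complex.I) with hudef
  have habs : ‖u‖ = ‖w‖ := by
    simp [hudef, Complex.norm_exp]
  by_contra hcon
  push_neg at hcon
  have hwabs : 0 < ‖w‖ := by
    rcases (norm_nonneg w).lt_or_eq with h | h
    · exact h
    · exfalso
      have hw0 : w = 0 := by
        have := h.symm
        simpa using this
      rw [hudef, hw0] at hcon
      simp at hcon
  have hu0 : u ≠ 0 := by
    intro h0
    rw [h0] at hcon
    simp at hcon
    nlinarith [norm_nonneg w, hc0]
  have hcosarg : Real.cos u.arg = u.re / ‖u‖ := Complex.cos_arg hu0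
  have hgt : Real.cos (ν / m) < Real.cos u.arg := by
    rw [hcosarg, habs, lt_div_iff₀ hwabs]
    exact hcon
  have hargle : |u.arg| ≤ ν / m := by
    by_contra hcc
    push_neg at hcc
    have h1 : Real.cos |u.arg| < Real.cos (ν / m) := by
      apply Real.cos_lt_cos_of_nonneg_of_le_pi hνm0.le (Complex.abs_arg_le_pi u) hcc
    rw [Real.cos_abs] at h1
    linarith
  apply hz
  refine ⟨‖w‖, norm_nonneg w, ν - u.arg, ?_, ?_⟩
  · simpa using hargle
  · have hwu : w = u * Complex.exp (-(ν:ℂ) * Complex.I) := by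
      rw [hudef, mul_assoc, ← Complex.exp_add]
      simp
    have h1 := Complex.norm_mul_exp_arg_mul_I u
    have hexpeq : (-((ν - u.arg : ℝ) : ℂ)) * Complex.I
        = (u.arg : ℂ) * Complex.I + -(ν:ℂ) * Complex.I := by
      push_cast
      ring
    have hwexp : w = ((‖w‖ : ℝ) : ℂ)
        * Complex.exp (-((ν - u.arg : ℝ) : ℂ) * Complex.I) := by
      rw [hexpeq, Complex.exp_add, ← mul_assoc, ← habs, h1]
      exact hwu
    rw [hwdef] at hwexp ⊢
    rw [← hwexp]
    ring

/-- For `ν ∈ (0, π/16)`, `m ≥ 4`, `θ` with `Im θ = ν`, `|Re θ| ≤ 10⁻³`,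
`λ ∈ ℂ`, `z ∉ C_m(λ)`, `0 ≤ r ≤ |z - λ|` and `s ≥ 0`:
`|(s + r)/(e^{-θ} s - (z - λ))| ≤ 6/sin(ν/m)`. -/
theorem cone_resolvent_quotient_bound
    (ν m : ℝ) (hν : ν ∈ Set.Ioo (0 : ℝ) (Real.pi / 16)) (hm : 4 ≤ m)
    (θ : ℂ) (hθim : θ.im = ν) (hθre : |θ.re| ≤ 1 / 1000) (lam : ℂ) :
    ∀ z : ℂ, z ∉ cone ν m lam →
      ∀ r : ℝ, 0 ≤ r → r ≤ ‖z - lam‖ →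
        ∀ s : ℝ, 0 ≤ s →
          ‖((s : ℂ) + (r : ℂ)) / (Complex.exp (-θ) * (s : ℂ) - (z - lam))‖ ≤
            6 / Real.sin (ν / m) := by
  obtain ⟨hν0, hν16⟩ := hν
  have hπ := Real.pi_pos
  have hm0 : (0:ℝ) < m := by linarith
  have hνm0 : 0 < ν / m := div_pos hν0 hm0
  have hνmlt : ν / m < Real.pi / 2 := by
    have h1 : ν / m ≤ ν / 4 := by gcongr
    linarith
  have hσ : 0 < Real.sin (ν / m) := Real.sin_pos_of_pos_of_lt_pi hνm0 (by linarith)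
  have hc0 : 0 < Real.cos (ν / m) := Real.cos_pos_of_mem_Ioo ⟨by linarith, hνmlt⟩
  have hc1 : Real.cos (ν / m) ≤ 1 := Real.cos_le_one _
  intro z hz r hr0 hr s hs
  set w := z - lam with hwdef
  set u := w * Complex.exp ((ν:ℂ) * Complex.I) with hudef
  have habs : ‖u‖ = ‖w‖ := by
    simp [hudef, Complex.norm_exp]
  have key : u.re ≤ Real.cos (ν / m) * ‖w‖ :=
    cone_re_bound ν m hνm0 hνmlt lam z hz
  -- main estimate
  set t := s * Real.exp (-θ.re) with htdef
  have ht0 : 0 ≤ t := mul_nonneg hs (Real.exp_pos _).le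
  have hexp : Complex.exp (-θ) * (s:ℂ) = (t:ℂ) * Complex.exp (-(ν:ℂ) * Complex.I) := by
    have hθ : -θ = ((-θ.re : ℝ) : ℂ) + (-(ν:ℂ)) * Complex.I := by
      rw [← hθim]
      apply Complex.ext <;> simp
    rw [hθ, Complex.exp_add, ← Complex.ofReal_exp, htdef]
    push_cast
    ring
  have hsle : s ≤ 3 * t := by
    have h1 : θ.re ≤ 1/1000 := (abs_le.mp hθre).2
    have h2 : (0.999 : ℝ) ≤ Real.exp (-θ.re) := by
      have := Real.add_one_le_exp (-θ.re)
      linarith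
    nlinarith
  set D := Complex.exp (-θ) * (s:ℂ) - w with hDdef
  have hconj : Complex.exp (-(ν:ℂ) * Complex.I) * (starRingEnd ℂ) w = (starRingEnd ℂ) u := by
    rw [hudef, map_mul, ← Complex.exp_conj]
    simp [mul_comm]
  have hD2 : (Real.sin (ν/m) * ((t + r)/2))^2 ≤ ‖D‖ ^ 2 := by
    rw [Complex.sq_norm, hDdef, hexp, Complex.normSq_sub]
    have h2 : ((t:ℂ) * Complex.exp (-(ν:ℂ) * Complex.I) * (starRingEnd ℂ) w).re
        = t * u.re := by
      rw [mul_assoc, hconj]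
      simp
    rw [h2]
    have h3 : Complex.normSq ((t:ℂ) * Complex.exp (-(ν:ℂ) * Complex.I)) = t^2 := by
      rw [← Complex.sq_norm]
      simp [Complex.norm_exp, sq_abs]
    have h4 : Complex.normSq w = ‖w‖ ^ 2 := (Complex.sq_norm w).symm
    have hsin2 : Real.sin (ν/m)^2 = 1 - Real.cos (ν/m)^2 := Real.sin_sq _
    rw [h3, h4]
    have hk : t * u.re ≤ t * (Real.cos (ν/m) * ‖w‖) :=
      mul_le_mul_of_nonneg_left key ht0
    have hmain := quad_aux (Real.sin (ν/m)) (Real.cos (ν/m)) t (‖w‖) r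
      hsin2 ht0 (norm_nonneg w) hr0 hr
    linarith
  have hDbound : Real.sin (ν/m) * ((t + r)/2) ≤ ‖D‖ := by
    nlinarith [hD2, norm_nonneg D,
      mul_nonneg hσ.le (by linarith : (0:ℝ) ≤ (t+r)/2)]
  have hnum : ‖(s:ℂ) + (r:ℂ)‖ = s + r := by
    rw [← Complex.ofReal_add, Complex.norm_real, Real.norm_eq_abs, abs_of_nonneg (by linarith)]
  rw [norm_div, hnum]
  rcases eq_or_lt_of_le (by positivity : (0:ℝ) ≤ t + r) with h0 | h0
  · have ht : t = 0 := by linarith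
    have hr' : r = 0 := by linarith
    have hs0 : s = 0 := by nlinarith [Real.exp_pos (-θ.re)]
    rw [hs0, hr']
    simp
    positivity
  · have hD0 : 0 < ‖D‖ :=
      lt_of_lt_of_le (mul_pos hσ (by linarith)) hDbound
    rw [div_le_div_iff₀ hD0 hσ]
    linarith [mul_le_mul_of_nonneg_right
      (show s + r ≤ 3*(t+r) by linarith) hσ.le, hDbound]
end

section
/- Let ν ∈ (0, π/16), let m ≥ 4 be a real number, let θ ∈ ℂ with Im θ = ν and |Re θ| ≤ 10⁻³, and let λ ∈ ℂ. Then for every z ∈ ℂ with z ∉ C_m(λ) and every s ≥ 0, one has |λ − z + s·e^{−θ}| ≥ (sin(ν/m)/2) · |λ − z|. -/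
open Real

private lemma cone_aux_key (sb cb r d t i : ℝ) (hpyth : sb ^ 2 + cb ^ 2 = 1)
    (hd0 : 0 ≤ d) (hd : d ≤ sb * r) (hti : t ^ 2 + i ^ 2 = d ^ 2) :
    i ^ 2 * cb ^ 2 ≤ sb ^ 2 * (r - t) ^ 2 := by
  have hd2 : d ^ 2 ≤ sb ^ 2 * r ^ 2 := by nlinarith [mul_self_le_mul_self hd0 hd]
  nlinarith [sq_nonneg (t - sb ^ 2 * r)]

/-- For `ν ∈ (0, π/16)`, `m ≥ 4`, `θ` with `Im θ = ν`, `|Re θ| ≤ 10⁻³`,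
`λ ∈ ℂ`, `z ∉ C_m(λ)` and `s ≥ 0`: `|λ - z + s e^{-θ}| ≥ (sin(ν/m)/2) |λ - z|`. -/
theorem cone_shifted_point_lower_bound
    (ν m : ℝ) (hν : ν ∈ Set.Ioo (0 : ℝ) (Real.pi / 16)) (hm : 4 ≤ m)
    (θ : ℂ) (hθim : θ.im = ν) (hθre : |θ.re| ≤ 1 / 1000) (lam : ℂ) :
    ∀ z : ℂ, z ∉ cone ν m lam → ∀ s : ℝ, 0 ≤ s →
      (Real.sin (ν / m) / 2) * ‖lam - z‖ ≤
        ‖lam - z + (s : ℂ) * Complex.exp (-θ)‖ := by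
  intro z hz s hs
  by_contra hcon
  push_neg at hcon
  set β : ℝ := ν / m with hβdef
  have hm0 : (0:ℝ) < m := by linarith
  have hβ0 : 0 < β := div_pos hν.1 hm0
  have hβ1 : β < 1 := by
    have h1 : β ≤ ν / 4 :=
      div_le_div_of_nonneg_left (le_of_lt hν.1) (by norm_num) hm
    nlinarith [hν.2, Real.pi_lt_d2]
  have hβpi : β < π / 2 := by nlinarith [Real.pi_gt_three]
  have hsin0 : 0 < Real.sin β := Real.sin_pos_of_pos_of_lt_pi hβ0 (by linarith [Real.pi_pos])
  have hsin1 : Real.sin β < 1 := lt_trans (Real.sin_lt hβ0) hβ1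
  have hcos0 : 0 < Real.cos β := Real.cos_pos_of_mem_Ioo ⟨by linarith, hβpi⟩
  set u : ℂ := lam - z with hu
  set w : ℂ := lam - z + (s : ℂ) * Complex.exp (-θ) with hw
  -- hcon : ‖w‖ < sin β / 2 * ‖u‖
  have hA0 : 0 < ‖u‖ := by
    rcases le_or_gt (‖u‖) 0 with h | h
    · exfalso
      have := norm_nonneg w
      nlinarith
    · exact h
  have hs0 : 0 < s := by
    rcases lt_or_eq_of_le hs with h | h
    · exact h
    · exfalso
      have hwu : w = u := by rw [hw, hu, ← h]; simp
      rw [hwu] at hcon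
      nlinarith
  set r : ℝ := s * Real.exp (-θ.re) with hrdef
  have hr0 : 0 < r := mul_pos hs0 (Real.exp_pos _)
  have habs_se : ‖(s : ℂ) * Complex.exp (-θ)‖ = r := by
    rw [norm_mul, Complex.norm_exp, Complex.norm_real, Real.norm_eq_abs, abs_of_nonneg hs]
    simp [hrdef]
  have hAle : ‖u‖ ≤ ‖w‖ + r := by
    have : u = w - (s : ℂ) * Complex.exp (-θ) := by rw [hw]; ring
    calc ‖u‖ = ‖w - (s : ℂ) * Complex.exp (-θ)‖ := by rw [← this]
      _ ≤ ‖w‖ + ‖(s : ℂ) * Complex.exp (-θ)‖ :=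
          (norm_sub_le _ _)
      _ = ‖w‖ + r := by rw [habs_se]
  -- rotated quantities
  set w' : ℂ := w * Complex.exp ((ν : ℂ) * Complex.I) with hw'
  have habs_w' : ‖w'‖ = ‖w‖ := by
    rw [hw', norm_mul, Complex.norm_exp]
    simp
  set q : ℂ := (z - lam) * Complex.exp ((ν : ℂ) * Complex.I) with hq
  have hqval : q = (r : ℂ) - w' := by
    have hexp : Complex.exp (-θ) * Complex.exp ((ν : ℂ) * Complex.I)
        = ((Real.exp (-θ.re) : ℝ) : ℂ) := by
      rw [← Complex.exp_add, Complex.ofReal_exp]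
      congr 1
      apply Complex.ext
      · simp
      · simp [hθim]
    have hzl : z - lam = (s : ℂ) * Complex.exp (-θ) - w := by rw [hw]; ring
    rw [hq, hzl, sub_mul, mul_assoc, hexp, ← hw']
    push_cast [hrdef]
    ring
  set d : ℝ := ‖w‖ with hd
  have hd0 : 0 ≤ d := norm_nonneg w
  have hdlt : d < Real.sin β / 2 * ‖u‖ := hcon
  have hrA : ‖u‖ ≤ 2 * r := by nlinarith
  have hdr : d ≤ Real.sin β * r := by nlinarith
  set t : ℝ := w'.re with ht
  have htd : |t| ≤ d := by
    rw [ht, ← habs_w']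
    exact Complex.abs_re_le_norm w'
  have him2 : t ^ 2 + w'.im ^ 2 = d ^ 2 := by
    rw [ht, ← habs_w', Complex.sq_norm, Complex.normSq_apply]; ring
  clear_value β u w r w' q d t
  have hqre : q.re = r - t := by rw [hqval]; simp [ht]
  have hqim : q.im = -w'.im := by rw [hqval]; simp
  have hqre0 : 0 < q.re := by
    rw [hqre]
    have : t ≤ d := le_of_abs_le htd
    nlinarith
  have hq0 : q ≠ 0 := by
    intro h
    rw [h] at hqre0
    simp at hqre0
  -- key inequality: |q.im| ≤ sin β * |q|
  have hpyth : Real.sin β ^ 2 + Real.cos β ^ 2 = 1 := Real.sin_sq_add_cos_sq β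
  have hkey : |q.im| ≤ Real.sin β * ‖q‖ := by
    have habsq2 : (‖q‖) ^ 2 = (r - t) ^ 2 + q.im ^ 2 := by
      rw [Complex.sq_norm, Complex.normSq_apply, hqre]; ring
    have hqim2 : q.im ^ 2 = w'.im ^ 2 := by rw [hqim]; ring
    have hsq : q.im ^ 2 * Real.cos β ^ 2 ≤ Real.sin β ^ 2 * (r - t) ^ 2 := by
      rw [hqim2]
      exact cone_aux_key (Real.sin β) (Real.cos β) r d t w'.im hpyth hd0 hdr him2
    have habsq0 : 0 ≤ ‖q‖ := norm_nonneg q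
    have h3 : |q.im| ^ 2 ≤ (Real.sin β * ‖q‖) ^ 2 := by
      rw [sq_abs]
      have e1 : (Real.sin β * ‖q‖) ^ 2
          = Real.sin β ^ 2 * (r - t) ^ 2 + Real.sin β ^ 2 * q.im ^ 2 := by
        rw [mul_pow, habsq2]; ring
      rw [e1]
      have hp2 : q.im ^ 2 * Real.sin β ^ 2 + q.im ^ 2 * Real.cos β ^ 2 = q.im ^ 2 := by
        linear_combination q.im ^ 2 * hpyth
      linarith [hsq, hp2]
    exact (abs_le_of_sq_le_sq' h3 (mul_nonneg (le_of_lt hsin0) habsq0)).2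
  -- bound the argument
  have harg : |q.arg| ≤ β := by
    have hargeq : q.arg = Real.arcsin (q.im / ‖q‖) :=
      Complex.arg_of_re_nonneg (le_of_lt hqre0)
    have habsq0 : 0 < ‖q‖ := norm_pos_iff.mpr hq0
    have h1 : q.im / ‖q‖ ≤ Real.sin β := by
      rw [div_le_iff₀ habsq0]
      calc q.im ≤ |q.im| := le_abs_self _
        _ ≤ Real.sin β * ‖q‖ := hkey
    have h2 : -Real.sin β ≤ q.im / ‖q‖ := by
      rw [le_div_iff₀ habsq0]
      linarith [hkey, neg_le_abs q.im]
    rw [hargeq, abs_le]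
    constructor
    · calc -β = Real.arcsin (Real.sin (-β)) := by
            rw [Real.arcsin_sin (by linarith) (by linarith)]
        _ ≤ Real.arcsin (q.im / ‖q‖) := by
            apply Real.monotone_arcsin
            rw [Real.sin_neg]; exact h2
    · calc Real.arcsin (q.im / ‖q‖) ≤ Real.arcsin (Real.sin β) :=
            Real.monotone_arcsin h1
        _ = β := Real.arcsin_sin (by linarith) (by linarith)
  -- build the cone membership, contradiction
  apply hz
  refine ⟨‖q‖, norm_nonneg q, ν - q.arg, ?_, ?_⟩
  · rw [show ν - q.arg - ν = -q.arg by ring, abs_neg, ← hβdef]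
    exact harg
  · have hexp : Complex.exp (-((ν - q.arg : ℝ) : ℂ) * Complex.I)
        = Complex.exp ((q.arg : ℂ) * Complex.I) * Complex.exp (-(ν : ℂ) * Complex.I) := by
      rw [← Complex.exp_add]
      congr 1
      push_cast
      ring
    rw [hexp, ← mul_assoc, Complex.norm_mul_exp_arg_mul_I, hq]
    rw [mul_assoc, ← Complex.exp_add]
    have : (ν : ℂ) * Complex.I + -(ν : ℂ) * Complex.I = 0 := by ring
    rw [this, Complex.exp_zero, mul_one]
    ring
end

section
/- Let ν ∈ (0, π/16), let m ≥ 4 be a real number, let θ ∈ ℂ with Im θ = ν and |Re θ| ≤ 10⁻³, and let v ∈ ℂ. Then: (a) for every z ∈ ℂ and every s ≥ 0, dist(z − e^{−θ}·s, C_m(v)) ≥ dist(z, C_m(v)); and (b) for every z ∈ ℂ with z ∉ C_m(v) and every s ≥ 0, dist(z − e^{−θ}·s, C_m(v)) ≥ (1/2)·s·sin(ν/m). -/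
open Real

namespace ConeAux

/-- The linear functional `w ↦ Im (w e^{iβ})`. -/
noncomputable def F (β : ℝ) (w : ℂ) : ℝ := (w * Complex.exp ((β : ℂ) * Complex.I)).im

lemma F_add (β : ℝ) (w₁ w₂ : ℂ) : F β (w₁ + w₂) = F β w₁ + F β w₂ := by
  simp [F, add_mul]

lemma F_sub (β : ℝ) (w₁ w₂ : ℂ) : F β (w₁ - w₂) = F β w₁ - F β w₂ := by
  simp [F, sub_mul]

lemma F_eq (c : ℝ) (w : ℂ) : F c w = w.re * Real.sin c + w.im * Real.cos c := by
  unfold F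
  rw [Complex.exp_mul_I]
  simp [Complex.add_im, Complex.mul_im, Complex.cos_ofReal_re, Complex.sin_ofReal_re,
    Complex.cos_ofReal_im, Complex.sin_ofReal_im]

lemma F_shift (c d : ℝ) (u : ℂ) : F (c + d) u = F d (u * Complex.exp ((c : ℂ) * Complex.I)) := by
  unfold F
  rw [mul_assoc, ← Complex.exp_add]
  congr 3
  push_cast
  ring

lemma F_smul_exp (x α β : ℝ) :
    F β ((x : ℂ) * Complex.exp (-(α : ℂ) * Complex.I)) = x * Real.sin (β - α) := by
  have h : -(α : ℂ) * Complex.I = ((-α : ℝ) : ℂ) * Complex.I := by push_cast; ring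
  rw [h, Complex.exp_mul_I, F_eq]
  simp only [Complex.add_re, Complex.add_im, Complex.mul_re, Complex.mul_im,
    Complex.ofReal_re, Complex.ofReal_im, Complex.I_re, Complex.I_im,
    Complex.cos_ofReal_re, Complex.sin_ofReal_re, Complex.cos_ofReal_im, Complex.sin_ofReal_im,
    Real.sin_sub, Real.cos_neg, Real.sin_neg]
  ring

lemma abs_F_le_dist (β : ℝ) (z p : ℂ) : |F β (z - p)| ≤ dist z p := by
  have h1 : |F β (z - p)| ≤ ‖(z - p) * Complex.exp ((β : ℂ) * Complex.I)‖ :=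
    Complex.abs_im_le_norm _
  rwa [norm_mul, Complex.norm_exp_ofReal_mul_I, mul_one, ← Complex.dist_eq] at h1

lemma le_infDist' {s : Set ℂ} {b : ℝ} {x : ℂ} (hne : s.Nonempty)
    (h : ∀ y ∈ s, b ≤ dist x y) : b ≤ Metric.infDist x s := by
  by_contra hb
  push_neg at hb
  obtain ⟨y, hy, hlt⟩ := (Metric.infDist_lt_iff hne).1 hb
  exact absurd (h y hy) (not_le.2 hlt)

/-- Half-plane characterization of the cone. -/
lemma mem_cone_iff {ν m : ℝ} (hδ0 : 0 < ν / m) (hδπ : ν / m < π / 2) (v z : ℂ) :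
    z ∈ cone ν m v ↔
      0 ≤ F (ν + ν / m) (z - v) ∧ F (ν - ν / m) (z - v) ≤ 0 := by
  set δ := ν / m with hδ
  constructor
  · rintro ⟨x, hx, α, hα, rfl⟩
    rw [add_sub_cancel_left]
    rw [abs_le] at hα
    rw [F_smul_exp, F_smul_exp]
    constructor
    · apply mul_nonneg hx
      apply Real.sin_nonneg_of_nonneg_of_le_pi
      · linarith [hα.2]
      · linarith [hα.1, hδπ, Real.pi_pos]
    · rw [show ν - δ - α = -(α - (ν - δ)) by ring, Real.sin_neg]
      apply mul_nonpos_of_nonneg_of_nonpos hx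
      simp only [neg_nonpos]
      apply Real.sin_nonneg_of_nonneg_of_le_pi
      · linarith [hα.1]
      · linarith [hα.2, hδπ, Real.pi_pos]
  · rintro ⟨h1, h2⟩
    have hsδ : 0 < Real.sin δ := Real.sin_pos_of_pos_of_lt_pi hδ0 (by linarith [Real.pi_pos])
    have hcδ : 0 < Real.cos δ := Real.cos_pos_of_mem_Ioo ⟨by linarith, hδπ⟩
    set w : ℂ := (z - v) * Complex.exp ((ν : ℂ) * Complex.I) with hw
    set a := w.re with ha
    set b := w.im with hb
    have hzv : z - v = w * Complex.exp (-(ν : ℂ) * Complex.I) := by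
      rw [hw, mul_assoc, ← Complex.exp_add]
      simp
    have h1' : 0 ≤ a * Real.sin δ + b * Real.cos δ := by
      have := h1
      rwa [F_shift ν δ, ← hw, F_eq] at this
    have h2' : -(a * Real.sin δ) + b * Real.cos δ ≤ 0 := by
      have := h2
      rw [show ν - δ = ν + (-δ) by ring, F_shift ν (-δ), ← hw, F_eq,
        Real.sin_neg, Real.cos_neg] at this
      linarith
    have hab : |b| * Real.cos δ ≤ a * Real.sin δ := by
      rcases abs_cases b with ⟨hb1, _⟩ | ⟨hb1, _⟩ <;> rw [hb1] <;> nlinarith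
    have ha0 : 0 ≤ a := by nlinarith [abs_nonneg b]
    by_cases hw0 : w = 0
    · refine ⟨0, le_refl _, ν, by simp; exact le_of_lt hδ0, ?_⟩
      have : z - v = 0 := by rw [hzv, hw0, zero_mul]
      rw [show z = v + (z - v) by ring, this]
      simp
    · -- w ≠ 0
      have habs : 0 < ‖w‖ := by
        simpa [norm_pos_iff] using hw0
      have hsq : ‖w‖ ^ 2 = a ^ 2 + b ^ 2 := by
        rw [Complex.sq_norm, Complex.normSq_apply]; ring
      have hble : |b| ≤ ‖w‖ * Real.sin δ := by
        nlinarith [abs_nonneg b, sq_abs b, Real.sin_sq_add_cos_sq δ, mul_pos habs hsδ]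
      -- arg bound
      have harg : |Complex.arg w| ≤ δ := by
        rw [Complex.arg_of_re_nonneg ha0]
        have hdiv : |b / ‖w‖| ≤ Real.sin δ := by
          rw [abs_div, abs_of_pos habs]
          rw [div_le_iff₀ habs]
          linarith [hble]
        have hsin1 : Real.sin δ ≤ 1 := Real.sin_le_one δ
        rw [abs_le] at hdiv ⊢
        constructor
        · have h3 : Real.sin (-δ) ≤ b / ‖w‖ := by
            rw [Real.sin_neg]; linarith [hdiv.1]
          have h4 := Real.monotone_arcsin h3
          rwa [Real.arcsin_sin (by linarith) (by linarith : -δ ≤ π/2)] at h4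
        · have h4 := Real.monotone_arcsin hdiv.2
          rwa [Real.arcsin_sin (by linarith : -(π/2) ≤ δ) (by linarith)] at h4
      refine ⟨‖w‖, (norm_nonneg w), ν - Complex.arg w, ?_, ?_⟩
      · rw [show ν - Complex.arg w - ν = -(Complex.arg w) by ring, abs_neg]
        exact harg
      · have h5 : ((‖w‖ : ℝ) : ℂ) * Complex.exp (-((ν - w.arg : ℝ) : ℂ) * Complex.I)
            = z - v := by
          have h6 : -(((ν - w.arg : ℝ)) : ℂ) * Complex.I
              = (w.arg : ℂ) * Complex.I + -(ν : ℂ) * Complex.I := by push_cast; ring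
          rw [h6, Complex.exp_add, ← mul_assoc, Complex.norm_mul_exp_arg_mul_I]
          exact hzv.symm
        rw [h5]
        ring

end ConeAux

open ConeAux in
/-- For `ν ∈ (0, π/16)`, `m ≥ 4`, `θ` with `Im θ = ν`, `|Re θ| ≤ 10⁻³`
and `v ∈ ℂ`: (a) for every `z` and `s ≥ 0`, `dist(z - e^{-θ} s, C_m(v)) ≥ dist(z, C_m(v))`;
(b) for every `z ∉ C_m(v)` and `s ≥ 0`, `dist(z - e^{-θ} s, C_m(v)) ≥ (1/2) s sin(ν/m)`. -/
theorem cone_dist_shift_lower_bounds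
    (ν m : ℝ) (hν : ν ∈ Set.Ioo (0 : ℝ) (Real.pi / 16)) (hm : 4 ≤ m)
    (θ : ℂ) (hθim : θ.im = ν) (hθre : |θ.re| ≤ 1 / 1000) (v : ℂ) :
    (∀ z : ℂ, ∀ s : ℝ, 0 ≤ s →
      Metric.infDist z (cone ν m v) ≤
        Metric.infDist (z - Complex.exp (-θ) * (s : ℂ)) (cone ν m v)) ∧
    (∀ z : ℂ, z ∉ cone ν m v → ∀ s : ℝ, 0 ≤ s →
      (1/2) * s * Real.sin (ν / m) ≤
        Metric.infDist (z - Complex.exp (-θ) * (s : ℂ)) (cone ν m v)) := by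
  obtain ⟨hν0, hνπ⟩ := hν
  have hm0 : (0 : ℝ) < m := by linarith
  have hδ0 : 0 < ν / m := div_pos hν0 hm0
  have hδν : ν / m ≤ ν := by
    rw [div_le_iff₀ hm0]; nlinarith
  have hδπ : ν / m < π / 2 := by
    have : π / 16 < π / 2 := by linarith [Real.pi_pos]
    linarith
  have hsδ : 0 < Real.sin (ν / m) :=
    Real.sin_pos_of_pos_of_lt_pi hδ0 (by linarith [Real.pi_pos])
  have hne : (cone ν m v).Nonempty := by
    refine ⟨v, 0, le_refl _, ν, by simp [le_of_lt hδ0], by simp⟩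
  -- decompose the shift
  have hshift : ∀ s : ℝ, Complex.exp (-θ) * (s : ℂ)
      = ((Real.exp (-θ.re) * s : ℝ) : ℂ) * Complex.exp (-(ν : ℂ) * Complex.I) := by
    intro s
    have hθ : -θ = ((-θ.re : ℝ) : ℂ) + (-(ν : ℂ)) * Complex.I := by
      apply Complex.ext <;> simp [hθim]
    rw [hθ, Complex.exp_add, ← Complex.ofReal_exp]
    push_cast
    ring
  constructor
  · intro z s hs
    rw [hshift s]
    set r := Real.exp (-θ.re) * s with hrdef
    have hr : 0 ≤ r := mul_nonneg (Real.exp_nonneg _) hs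
    set u : ℂ := ((r : ℝ) : ℂ) * Complex.exp (-(ν : ℂ) * Complex.I) with hu
    apply le_infDist' hne
    intro p hp
    have hpu : p + u ∈ cone ν m v := by
      rw [mem_cone_iff hδ0 hδπ] at hp ⊢
      have e1 : p + u - v = (p - v) + u := by ring
      rw [e1, F_add, F_add, F_smul_exp, F_smul_exp]
      constructor
      · have : 0 ≤ r * Real.sin (ν + ν / m - ν) := by
          rw [show ν + ν / m - ν = ν / m by ring]
          positivity
        linarith [hp.1]
      · have : r * Real.sin (ν - ν / m - ν) ≤ 0 := by
          rw [show ν - ν / m - ν = -(ν / m) by ring, Real.sin_neg]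
          nlinarith
        linarith [hp.2]
    calc Metric.infDist z (cone ν m v) ≤ dist z (p + u) :=
          Metric.infDist_le_dist_of_mem hpu
      _ = dist (z - u) p := by
          rw [Complex.dist_eq, Complex.dist_eq]
          congr 1
          ring
  · intro z hz s hs
    rw [hshift s]
    set r := Real.exp (-θ.re) * s with hrdef
    have hr : 0 ≤ r := mul_nonneg (Real.exp_nonneg _) hs
    have hrs : s / 2 ≤ r := by
      have h1 : -θ.re ≥ -(1/1000) := by
        have := abs_le.1 hθre
        linarith [this.2]
      have h2 : Real.exp (-θ.re) ≥ 1/2 := by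
        have := Real.add_one_le_exp (-θ.re)
        linarith
      nlinarith
    set u : ℂ := ((r : ℝ) : ℂ) * Complex.exp (-(ν : ℂ) * Complex.I) with hu
    have hgoal : r * Real.sin (ν / m) ≤ Metric.infDist (z - u) (cone ν m v) := by
      apply le_infDist' hne
      intro p hp
      have hFu1 : F (ν + ν / m) u = r * Real.sin (ν / m) := by
        rw [hu, F_smul_exp, show ν + ν / m - ν = ν / m by ring]
      have hFu2 : F (ν - ν / m) u = -(r * Real.sin (ν / m)) := by
        rw [hu, F_smul_exp, show ν - ν / m - ν = -(ν / m) by ring, Real.sin_neg]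
        ring
      rw [mem_cone_iff hδ0 hδπ] at hp hz
      push_neg at hz
      rcases lt_or_ge (F (ν + ν / m) (z - v)) 0 with hc | hc
      · -- violated upper half-plane: use β = ν + ν/m
        set β := ν + ν / m with hβ
        have key : r * Real.sin (ν / m) ≤ F β (p - (z - u)) := by
          have e2 : F β (p - (z - u)) = F β (p - v) - F β (z - v) + F β u := by
            simp only [F, sub_mul, add_mul, Complex.sub_im, Complex.add_im]
            ring
          rw [e2, hFu1]
          linarith [hp.1]
        calc r * Real.sin (ν / m) ≤ |F β (p - (z - u))| := key.trans (le_abs_self _)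
          _ ≤ dist p (z - u) := abs_F_le_dist β p (z - u)
          _ = dist (z - u) p := dist_comm _ _
      · have hc2 : 0 < F (ν - ν / m) (z - v) := hz hc
        set β := ν - ν / m with hβ
        have key : r * Real.sin (ν / m) ≤ F β ((z - u) - p) := by
          have e2 : F β ((z - u) - p) = F β (z - v) - F β (p - v) - F β u := by
            simp only [F, sub_mul, add_mul, Complex.sub_im, Complex.add_im]
            ring
          rw [e2, hFu2]
          linarith [hp.2]
        calc r * Real.sin (ν / m) ≤ |F β ((z - u) - p)| := key.trans (le_abs_self _)
          _ ≤ dist (z - u) p := abs_F_le_dist β (z - u) p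
    have : (1/2) * s * Real.sin (ν / m) ≤ r * Real.sin (ν / m) := by
      nlinarith
    linarith
end

section
/- Let η, λ ∈ ℂ with |η| < π/16 and |λ| < π/16. Then for every e ≥ 0, every s ≥ 0, and every r > 0 one has |e + e^{−λ}·s + r| ≤ 10 · |e + e^{−η}·s + r| (in particular the right-hand side is nonzero). -/
open Real

lemma dfhc_num : Real.exp (Real.pi/16) ≤
    10 * (Real.exp (-(Real.pi/16)) * Real.cos (Real.pi/16)) := by
  have hpi4 : Real.pi ≤ 4 := Real.pi_le_four
  have hpi0 : (0:ℝ) < Real.pi := Real.pi_pos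
  have h1 : Real.exp (Real.pi/16) ≤ Real.exp 1 := Real.exp_le_exp.2 (by linarith)
  have h2 : Real.exp 1 < 2.7182818286 := Real.exp_one_lt_d9
  have h3 : Real.exp (-1 : ℝ) ≤ Real.exp (-(Real.pi/16)) := Real.exp_le_exp.2 (by linarith)
  have h4 : Real.exp (-1 : ℝ) * Real.exp 1 = 1 := by
    rw [← Real.exp_add]; norm_num
  have h5 : (1:ℝ) - (Real.pi/16)^2/2 ≤ Real.cos (Real.pi/16) :=
    Real.one_sub_sq_div_two_le_cos
  have h6 : (0.96875:ℝ) ≤ Real.cos (Real.pi/16) := by nlinarith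
  have h7 : (0:ℝ) < Real.exp (-(Real.pi/16)) := Real.exp_pos _
  have h8 : (0:ℝ) < Real.exp 1 := Real.exp_pos _
  nlinarith [Real.exp_pos (-1:ℝ)]

/-- For `η, λ ∈ ℂ` with `|η| < π/16`, `|λ| < π/16`, and all
`e ≥ 0`, `s ≥ 0`, `r > 0`: `|e + e^{-λ} s + r| ≤ 10 |e + e^{-η} s + r|`
(and in particular the right-hand side is nonzero). -/
theorem dilated_free_hamiltonian_comparison
    (η lam : ℂ) (hη : ‖η‖ < Real.pi / 16) (hlam : ‖lam‖ < Real.pi / 16) :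
    ∀ e : ℝ, 0 ≤ e → ∀ s : ℝ, 0 ≤ s → ∀ r : ℝ, 0 < r →
      ‖(e : ℂ) + Complex.exp (-lam) * (s : ℂ) + (r : ℂ)‖ ≤
          10 * ‖(e : ℂ) + Complex.exp (-η) * (s : ℂ) + (r : ℂ)‖ ∧
        (e : ℂ) + Complex.exp (-η) * (s : ℂ) + (r : ℂ) ≠ 0 := by
  intro e he s hs r hr
  have hpi0 : (0:ℝ) < Real.pi := Real.pi_pos
  have hpi4 : Real.pi ≤ 4 := Real.pi_le_four
  -- bounds on parts
  have hηre : |η.re| ≤ ‖η‖ := Complex.abs_re_le_norm η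
  have hηim : |η.im| ≤ ‖η‖ := Complex.abs_im_le_norm η
  have hlre : |lam.re| ≤ ‖lam‖ := Complex.abs_re_le_norm lam
  -- real part of exp(-η)
  have hre : (Complex.exp (-η)).re = Real.exp (-η.re) * Real.cos η.im := by
    rw [Complex.exp_re]
    simp [Complex.neg_re, Complex.neg_im, Real.cos_neg]
  have hcos : Real.cos (Real.pi/16) ≤ Real.cos η.im := by
    have h : Real.cos (Real.pi/16) ≤ Real.cos |η.im| :=
      Real.cos_le_cos_of_nonneg_of_le_pi (abs_nonneg _) (by linarith) (by linarith)
    rwa [Real.cos_abs] at h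
  have hcos0 : 0 < Real.cos (Real.pi/16) := Real.cos_pos_of_mem_Ioo ⟨by linarith, by linarith⟩
  have hexp : Real.exp (-(Real.pi/16)) ≤ Real.exp (-η.re) := by
    apply Real.exp_le_exp.2
    have := (abs_le.1 hηre).2
    linarith
  have hBre : Real.exp (-(Real.pi/16)) * Real.cos (Real.pi/16) ≤ (Complex.exp (-η)).re := by
    rw [hre]
    have h1 : 0 < Real.exp (-(Real.pi/16)) := Real.exp_pos _
    nlinarith [Real.exp_pos (-η.re)]
  have hBre0 : 0 < (Complex.exp (-η)).re := by
    have := mul_pos (Real.exp_pos (-(Real.pi/16))) hcos0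
    linarith
  -- real part of whole denominator
  set z : ℂ := (e : ℂ) + Complex.exp (-η) * (s : ℂ) + (r : ℂ) with hz
  have hzre : z.re = e + (Complex.exp (-η)).re * s + r := by
    simp [hz, Complex.add_re, Complex.mul_re]
  have hzre0 : 0 < z.re := by
    rw [hzre]
    nlinarith
  have hznz : z ≠ 0 := fun h => by simp [h] at hzre0
  refine ⟨?_, hznz⟩
  -- lower bound on |z|
  have hlow : z.re ≤ ‖z‖ := Complex.re_le_norm z
  -- upper bound on numerator
  have hAb : ‖Complex.exp (-lam)‖ = Real.exp (-lam.re) := by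
    rw [Complex.norm_exp]; simp
  have hAb' : ‖Complex.exp (-lam)‖ ≤ Real.exp (Real.pi/16) := by
    rw [hAb]
    apply Real.exp_le_exp.2
    have := (abs_le.1 hlre).1
    linarith
  have hup : ‖(e : ℂ) + Complex.exp (-lam) * (s : ℂ) + (r : ℂ)‖ ≤
      e + Real.exp (Real.pi/16) * s + r := by
    have h2 : ‖Complex.exp (-lam) * (s:ℂ)‖ ≤ Real.exp (Real.pi/16) * s := by
      rw [norm_mul, Complex.norm_real, Real.norm_eq_abs, abs_of_nonneg hs]
      exact mul_le_mul_of_nonneg_right hAb' hs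
    have te : ‖(e:ℂ)‖ = e := by rw [Complex.norm_real, Real.norm_eq_abs, abs_of_nonneg he]
    have tr : ‖(r:ℂ)‖ = r := by rw [Complex.norm_real, Real.norm_eq_abs, abs_of_nonneg hr.le]
    calc ‖(e : ℂ) + Complex.exp (-lam) * (s : ℂ) + (r : ℂ)‖
        ≤ ‖(e:ℂ) + Complex.exp (-lam) * (s:ℂ)‖ + ‖(r:ℂ)‖ :=
          norm_add_le _ _
      _ ≤ ‖(e:ℂ)‖ + ‖Complex.exp (-lam) * (s:ℂ)‖ + ‖(r:ℂ)‖ := by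
          linarith [norm_add_le ((e:ℂ)) (Complex.exp (-lam) * (s:ℂ))]
      _ ≤ e + Real.exp (Real.pi/16) * s + r := by rw [te, tr]; linarith
  -- combine
  have key : e + Real.exp (Real.pi/16) * s + r ≤ 10 * z.re := by
    rw [hzre]
    have := dfhc_num
    nlinarith
  calc ‖(e : ℂ) + Complex.exp (-lam) * (s : ℂ) + (r : ℂ)‖
      ≤ e + Real.exp (Real.pi/16) * s + r := hup
    _ ≤ 10 * z.re := key
    _ ≤ 10 * ‖z‖ := by linarith
end
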